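/- arXiv:1205.4549 — 8 statements merged into one kernel-verified Lean document; each statement's English description precedes it below -/
import Mathlib

section
/- Let a < b be real numbers and let f : [a,b] → ℝ be absolutely continuous on [a,b] with f' ∈ L²[a,b]. Set σ(f') = ‖f'‖₂² − (f(b) − f(a))²/(b − a). Then |(f((3a+b)/4) + f((a+3b)/4))/2 − (1/(b−a)) ∫_a^b f(t) dt| ≤ ((b−a)^{1/2}/(4√3)) · √(σ(f')). -/
open MeasureTheory intervalIntegral Set

lemma ostr_tri_fubini {u v : ℝ} (huv : u ≤ v) {g : ℝ → ℝ}
    (hg : IntervalIntegrable g volume u v) :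
    ∫ t in u..v, (∫ s in u..t, g s) = ∫ s in u..v, (v - s) * g s := by
  set μ : Measure ℝ := volume.restrict (Set.Ioc u v) with hμdef
  have hgi : Integrable g μ :=
    (intervalIntegrable_iff_integrableOn_Ioc_of_le huv).mp hg
  have hfin : IsFiniteMeasure μ := by
    constructor
    rw [hμdef, Measure.restrict_apply_univ]
    exact measure_Ioc_lt_top
  set S : Set (ℝ × ℝ) := {z : ℝ × ℝ | z.2 ≤ z.1} with hS
  have hSm : MeasurableSet S := measurableSet_le measurable_snd measurable_fst
  have hbase : Integrable (fun z : ℝ × ℝ => g z.2) (μ.prod μ) := by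
    have h := (integrable_const (μ := μ) (c := (1:ℝ))).mul_prod hgi
    simpa using h
  have hF : Integrable (S.indicator (fun z : ℝ × ℝ => g z.2)) (μ.prod μ) :=
    hbase.indicator hSm
  have hswap := MeasureTheory.integral_integral_swap
    (f := fun t s => S.indicator (fun z : ℝ × ℝ => g z.2) (t, s)) (μ := μ) (ν := μ) hF
  -- LHS identification
  have hL : (∫ t, ∫ s, S.indicator (fun z : ℝ × ℝ => g z.2) (t, s) ∂μ ∂μ)
      = ∫ t in u..v, (∫ s in u..t, g s) := by
    rw [intervalIntegral.integral_of_le huv]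
    apply setIntegral_congr_fun measurableSet_Ioc
    intro t ht
    dsimp only
    have h1 : (fun s => S.indicator (fun z : ℝ × ℝ => g z.2) (t, s))
        = (Set.Iic t).indicator g := by
      funext s
      by_cases h : s ≤ t <;> simp [hS, Set.indicator, h]
    rw [h1, MeasureTheory.integral_indicator measurableSet_Iic, hμdef,
      Measure.restrict_restrict measurableSet_Iic]
    have h2 : Set.Iic t ∩ Set.Ioc u v = Set.Ioc u t := by
      ext s
      simp only [Set.mem_inter_iff, Set.mem_Iic, Set.mem_Ioc]
      constructor
      · rintro ⟨h1', h2', _⟩; exact ⟨h2', h1'⟩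
      · rintro ⟨h1', h2'⟩; exact ⟨h2', h1', h2'.trans ht.2⟩
    rw [h2, intervalIntegral.integral_of_le ht.1.le]
  -- RHS identification
  have hR : (∫ s, ∫ t, S.indicator (fun z : ℝ × ℝ => g z.2) (t, s) ∂μ ∂μ)
      = ∫ s in u..v, (v - s) * g s := by
    rw [intervalIntegral.integral_of_le huv]
    apply setIntegral_congr_fun measurableSet_Ioc
    intro s hs
    dsimp only
    have h1 : (fun t => S.indicator (fun z : ℝ × ℝ => g z.2) (t, s))
        = (Set.Ici s).indicator (fun _ => g s) := by
      funext t
      by_cases h : s ≤ t <;> simp [hS, Set.indicator, h]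
    rw [h1, MeasureTheory.integral_indicator measurableSet_Ici, hμdef,
      Measure.restrict_restrict measurableSet_Ici]
    have h2 : Set.Ici s ∩ Set.Ioc u v = Set.Icc s v := by
      ext t
      simp only [Set.mem_inter_iff, Set.mem_Ici, Set.mem_Ioc, Set.mem_Icc]
      constructor
      · rintro ⟨h1', _, h3'⟩; exact ⟨h1', h3'⟩
      · rintro ⟨h1', h2'⟩; exact ⟨h1', hs.1.trans_le h1', h2'⟩
    rw [h2, setIntegral_const, measureReal_def, Real.volume_Icc, smul_eq_mul,
      ENNReal.toReal_ofReal (by linarith [hs.2] : (0:ℝ) ≤ v - s)]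
  rw [← hL, ← hR, hswap]

lemma ostr_parts {u v c : ℝ} (huv : u ≤ v) {F g : ℝ → ℝ}
    (hg : IntervalIntegrable g volume u v)
    (hF : ∀ x ∈ Set.Icc u v, F x - F u = ∫ t in u..x, g t)
    (hFi : IntervalIntegrable F volume u v) :
    ∫ t in u..v, (t - c) * g t
      = (v - c) * (F v - F u) + (v - u) * F u - ∫ t in u..v, F t := by
  have hprim : ContinuousOn (fun x => ∫ t in u..x, g t) (Set.uIcc u v) :=
    continuousOn_primitive_interval' hg (by rw [Set.uIcc_of_le huv]; exact ⟨le_rfl, huv⟩)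
  have hFv := hF v ⟨huv, le_rfl⟩
  have h1 : ∫ t in u..v, F t = (v - u) * F u + ∫ s in u..v, (v - s) * g s := by
    have he : ∫ t in u..v, F t = ∫ t in u..v, (F u + ∫ s in u..t, g s) := by
      apply intervalIntegral.integral_congr
      intro x hx
      rw [Set.uIcc_of_le huv] at hx
      have h := hF x hx
      dsimp only
      linarith
    rw [he, intervalIntegral.integral_add intervalIntegrable_const
      ((hprim.mono (by rw [Set.uIcc_of_le huv])).intervalIntegrable_of_Icc huv),
      intervalIntegral.integral_const, smul_eq_mul, ostr_tri_fubini huv hg]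
  have hvt : IntervalIntegrable (fun t => (v - t) * g t) volume u v :=
    hg.continuousOn_mul (by fun_prop)
  have h3 : ∫ t in u..v, (t - c) * g t
      = (v - c) * (∫ t in u..v, g t) - ∫ t in u..v, (v - t) * g t := by
    rw [← intervalIntegral.integral_const_mul, ← intervalIntegral.integral_sub
      (hg.const_mul _) hvt]
    apply intervalIntegral.integral_congr
    intro x _
    ring
  rw [h3, ← hF v ⟨huv, le_rfl⟩]
  have : ∫ t in u..v, (v - t) * g t = (∫ t in u..v, F t) - (v - u) * F u := by
    linarith
  rw [this]
  ring

lemma ostr_cs {μ : Measure ℝ} (w z : ℝ → ℝ)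
    (hw : AEStronglyMeasurable w μ) (hz : AEStronglyMeasurable z μ)
    (hw2 : Integrable (fun x => w x ^ 2) μ) (hz2 : Integrable (fun x => z x ^ 2) μ) :
    |∫ x, w x * z x ∂μ| ≤ Real.sqrt (∫ x, w x ^ 2 ∂μ) * Real.sqrt (∫ x, z x ^ 2 ∂μ) := by
  have h2 : Real.HolderConjugate 2 2 := Real.HolderConjugate.two_two
  have habs : ∀ (h : ℝ → ℝ), AEStronglyMeasurable h μ →
      AEStronglyMeasurable (fun x => |h x|) μ := fun h hh => by
    simpa [Real.norm_eq_abs] using hh.norm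
  have hmw : MemLp (fun x => |w x|) (ENNReal.ofReal 2) μ := by
    rw [show ENNReal.ofReal 2 = 2 by simp [ENNReal.ofReal_ofNat]]
    exact (memLp_two_iff_integrable_sq (habs w hw)).2 (by simpa [sq_abs] using hw2)
  have hmz : MemLp (fun x => |z x|) (ENNReal.ofReal 2) μ := by
    rw [show ENNReal.ofReal 2 = 2 by simp [ENNReal.ofReal_ofNat]]
    exact (memLp_two_iff_integrable_sq (habs z hz)).2 (by simpa [sq_abs] using hz2)
  have key := integral_mul_le_Lp_mul_Lq_of_nonneg h2
    (Filter.Eventually.of_forall fun x => abs_nonneg (w x))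
    (Filter.Eventually.of_forall fun x => abs_nonneg (z x)) hmw hmz
  have e1 : ∫ x, |w x| ^ (2:ℝ) ∂μ = ∫ x, w x ^ 2 ∂μ := by
    congr 1; funext x
    rw [show ((2:ℝ)) = ((2:ℕ):ℝ) by norm_num, Real.rpow_natCast, sq_abs]
  have e2 : ∫ x, |z x| ^ (2:ℝ) ∂μ = ∫ x, z x ^ 2 ∂μ := by
    congr 1; funext x
    rw [show ((2:ℝ)) = ((2:ℕ):ℝ) by norm_num, Real.rpow_natCast, sq_abs]
  rw [e1, e2] at key
  calc |∫ x, w x * z x ∂μ| ≤ ∫ x, |w x * z x| ∂μ := by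
        have := MeasureTheory.norm_integral_le_integral_norm (f := fun x => w x * z x) (μ := μ)
        simp only [Real.norm_eq_abs] at this
        exact this
    _ = ∫ x, |w x| * |z x| ∂μ := by simp [abs_mul]
    _ ≤ (∫ x, w x ^ 2 ∂μ) ^ ((1:ℝ)/2) * (∫ x, z x ^ 2 ∂μ) ^ ((1:ℝ)/2) := key
    _ = Real.sqrt (∫ x, w x ^ 2 ∂μ) * Real.sqrt (∫ x, z x ^ 2 ∂μ) := by
        rw [Real.sqrt_eq_rpow, Real.sqrt_eq_rpow]

/-- **Trapezoid type inequality for `f' ∈ L²[a,b]`** (Corollary of Theorem 2.3, inequality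
(2.34)): with `σ(f') = ∫_a^b f'(t)² dt - (f b - f a)²/(b - a)`,
`|(f((3a+b)/4) + f((a+3b)/4))/2 - (1/(b-a)) ∫_a^b f| ≤ (√(b-a)/(4√3)) √(σ(f'))`. -/
theorem companion_ostrowski_first_deriv_L2_trapezoid_type
    (a b : ℝ) (hab : a < b) (f f' : ℝ → ℝ)
    (hcont : ContinuousOn f (Set.Icc a b))
    (hint : IntervalIntegrable f' MeasureTheory.volume a b)
    (hftc : ∀ x ∈ Set.Icc a b, f x - f a = ∫ t in a..x, f' t)
    (hL2 : IntervalIntegrable (fun t => (f' t) ^ 2) MeasureTheory.volume a b)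
    (σ : ℝ) (hσ : σ = (∫ t in a..b, (f' t) ^ 2) - (f b - f a) ^ 2 / (b - a)) :
    |(f ((3 * a + b) / 4) + f ((a + 3 * b) / 4)) / 2 - (1 / (b - a)) * ∫ t in a..b, f t|
      ≤ Real.sqrt (b - a) / (4 * Real.sqrt 3) * Real.sqrt σ := by
  have hA : (0:ℝ) < b - a := by linarith
  set p : ℝ := (3 * a + b) / 4 with hp
  set q : ℝ := (a + 3 * b) / 4 with hq
  set m : ℝ := (a + b) / 2 with hm
  set c₀ : ℝ := (f b - f a) / (b - a) with hc₀
  set g : ℝ → ℝ := fun t => f' t - c₀ with hg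
  set K : ℝ → ℝ := fun t => if t ≤ p then t - a else if t ≤ q then t - m else t - b with hK
  have hap : a ≤ p := by rw [hp]; linarith
  have hpq : p ≤ q := by rw [hp, hq]; linarith
  have hqb : q ≤ b := by rw [hq]; linarith
  have hpb : p ≤ b := hpq.trans hqb
  have haq : a ≤ q := hap.trans hpq
  set μ : Measure ℝ := volume.restrict (Set.Ioc a b) with hμ
  -- basic integrability transfers
  have hsub : ∀ u v : ℝ, a ≤ u → u ≤ v → v ≤ b →
      IntervalIntegrable f' volume u v := by
    intro u v hau huv hvb
    refine hint.mono_set ?_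
    rw [Set.uIcc_of_le huv, Set.uIcc_of_le hab.le]
    exact Set.Icc_subset_Icc hau hvb
  have hgsub : ∀ u v : ℝ, a ≤ u → u ≤ v → v ≤ b →
      IntervalIntegrable g volume u v := fun u v hau huv hvb =>
    (hsub u v hau huv hvb).sub intervalIntegrable_const
  have hfsub : ∀ u v : ℝ, a ≤ u → u ≤ v → v ≤ b →
      IntervalIntegrable f volume u v := by
    intro u v hau huv hvb
    apply ContinuousOn.intervalIntegrable
    apply hcont.mono
    rw [Set.uIcc_of_le huv]
    exact Set.Icc_subset_Icc hau hvb
  -- subinterval FTC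
  have hftc' : ∀ u : ℝ, a ≤ u → u ≤ b → ∀ x ∈ Set.Icc u b, f x - f u = ∫ t in u..x, f' t := by
    intro u hau hub x hx
    have h1 := hftc x ⟨hau.trans hx.1, hx.2⟩
    have h2 := hftc u ⟨hau, hub⟩
    have h3 := intervalIntegral.integral_interval_sub_left
      (hsub a x le_rfl (hau.trans hx.1) hx.2) (hsub a u le_rfl hau hub)
    linarith
  -- the generic piece value
  have piece : ∀ u v c : ℝ, a ≤ u → u ≤ v → v ≤ b →
      ∫ t in u..v, (t - c) * g t
        = ((v - c) * (f v - f u) + (v - u) * f u - ∫ t in u..v, f t)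
          - c₀ * ((v - c) ^ 2 - (u - c) ^ 2) / 2 := by
    intro u v c hau huv hvb
    have hFv : ∀ x ∈ Set.Icc u v, f x - f u = ∫ t in u..x, f' t := by
      intro x hx
      exact hftc' u hau (huv.trans hvb) x ⟨hx.1, hx.2.trans hvb⟩
    have h1 : ∫ t in u..v, (t - c) * g t
        = (∫ t in u..v, (t - c) * f' t) - ∫ t in u..v, (t - c) * c₀ := by
      rw [← intervalIntegral.integral_sub
        ((hsub u v hau huv hvb).continuousOn_mul (by fun_prop))
        (by apply ContinuousOn.intervalIntegrable; fun_prop)]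
      apply intervalIntegral.integral_congr
      intro x _
      simp only [hg]
      ring
    have h2 : ∫ t in u..v, (t - c) * c₀ = c₀ * ((v - c) ^ 2 - (u - c) ^ 2) / 2 := by
      have h3 : ∫ t in u..v, (t - c) = ((v - c) ^ 2 - (u - c) ^ 2) / 2 := by
        rw [show (fun t : ℝ => t - c) = fun t => (fun x : ℝ => x) (t - c) by rfl,
          intervalIntegral.integral_comp_sub_right (fun x : ℝ => x) c,
          integral_id]
      rw [show (fun t : ℝ => (t - c) * c₀) = fun t => c₀ * (t - c) by funext t; ring,
        intervalIntegral.integral_const_mul, h3]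
      ring
    rw [h1, h2, ostr_parts huv (hsub u v hau huv hvb) hFv (hfsub u v hau huv hvb)]
  -- kernel agrees with linear pieces a.e.
  have hKg1 : ∫ t in a..p, K t * g t = ∫ t in a..p, (t - a) * g t := by
    apply intervalIntegral.integral_congr
    intro x hx
    rw [Set.uIcc_of_le hap] at hx
    simp only [hK, if_pos hx.2]
  have hKg2 : ∫ t in p..q, K t * g t = ∫ t in p..q, (t - m) * g t := by
    apply intervalIntegral.integral_congr_ae
    apply Filter.Eventually.of_forall
    intro x hx
    rw [Set.uIoc_of_le hpq] at hx
    simp only [hK, if_neg (not_le.mpr hx.1), if_pos hx.2]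
  have hKg3 : ∫ t in q..b, K t * g t = ∫ t in q..b, (t - b) * g t := by
    apply intervalIntegral.integral_congr_ae
    apply Filter.Eventually.of_forall
    intro x hx
    rw [Set.uIoc_of_le hqb] at hx
    simp only [hK, if_neg (not_le.mpr (hpq.trans_lt hx.1)), if_neg (not_le.mpr hx.1)]
  -- integrability of K * g on pieces
  have hKgi : ∀ u v c : ℝ, a ≤ u → u ≤ v → v ≤ b →
      (∀ x ∈ Set.Ioc u v, K x = x - c) →
      IntervalIntegrable (fun t => K t * g t) volume u v := by
    intro u v c hau huv hvb hKc
    rw [intervalIntegrable_iff_integrableOn_Ioc_of_le huv]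
    have base : IntegrableOn (fun t => (t - c) * g t) (Set.Ioc u v) volume := by
      rw [← intervalIntegrable_iff_integrableOn_Ioc_of_le huv]
      exact (hgsub u v hau huv hvb).continuousOn_mul (by fun_prop)
    apply base.congr_fun ?_ measurableSet_Ioc
    intro x hx
    simp only [hKc x hx]
  have i1 := hKgi a p a le_rfl hap hpb (fun x hx => by simp only [hK, if_pos hx.2])
  have i2 := hKgi p q m hap hpq hqb (fun x hx => by
    simp only [hK, if_neg (not_le.mpr hx.1), if_pos hx.2])
  have i3 := hKgi q b b haq hqb le_rfl (fun x hx => by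
    simp only [hK, if_neg (not_le.mpr (hpq.trans_lt hx.1)), if_neg (not_le.mpr hx.1)])
  -- split of ∫ K g over [a,b]
  have hsplitKg : ∫ t in a..b, K t * g t
      = (∫ t in a..p, (t - a) * g t) + (∫ t in p..q, (t - m) * g t)
        + ∫ t in q..b, (t - b) * g t := by
    rw [← hKg1, ← hKg2, ← hKg3,
      intervalIntegral.integral_add_adjacent_intervals i1 i2,
      intervalIntegral.integral_add_adjacent_intervals (i1.trans i2) i3]
  have hfsplit : (∫ t in a..p, f t) + (∫ t in p..q, f t) + (∫ t in q..b, f t)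
      = ∫ t in a..b, f t := by
    rw [intervalIntegral.integral_add_adjacent_intervals (hfsub a p le_rfl hap hpb)
        (hfsub p q hap hpq hqb),
      intervalIntegral.integral_add_adjacent_intervals (hfsub a q le_rfl haq hqb)
        (hfsub q b haq hqb le_rfl)]
  -- value of ∫ K g
  have hIval : ∫ t in a..b, K t * g t
      = (b - a) / 2 * (f p + f q) - ∫ t in a..b, f t := by
    have s1 := piece a p a le_rfl hap hpb
    have s2 := piece p q m hap hpq hqb
    have s3 := piece q b b haq hqb le_rfl
    rw [hsplitKg, s1, s2, s3, ← hfsplit, hp, hq, hm]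
    ring
  -- pass to set integrals over Ioc a b
  have hIoc : ∫ x, K x * g x ∂μ = ∫ t in a..b, K t * g t := by
    rw [hμ, intervalIntegral.integral_of_le hab.le]
  -- measurability
  have hKm : Measurable K := by
    refine Measurable.ite measurableSet_Iic (measurable_id.sub_const a) ?_
    exact Measurable.ite measurableSet_Iic (measurable_id.sub_const m)
      (measurable_id.sub_const b)
  have hf'm : AEStronglyMeasurable f' μ := by
    rw [hμ]
    exact ((intervalIntegrable_iff_integrableOn_Ioc_of_le hab.le).mp hint).aestronglyMeasurable
  have hgm : AEStronglyMeasurable g μ := hf'm.sub aestronglyMeasurable_const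
  -- integrability of K^2 over Ioc a b
  have hKsq : ∀ u v c : ℝ, u ≤ v → (∀ x ∈ Set.Ioc u v, K x = x - c) →
      IntegrableOn (fun t => K t ^ 2) (Set.Ioc u v) volume ∧
        ∫ t in Set.Ioc u v, K t ^ 2 = ((v - c) ^ 3 - (u - c) ^ 3) / 3 := by
    intro u v c huv hKc
    have base : IntegrableOn (fun t => (t - c) ^ 2) (Set.Ioc u v) volume := by
      rw [← intervalIntegrable_iff_integrableOn_Ioc_of_le huv]
      apply ContinuousOn.intervalIntegrable; fun_prop
    constructor
    · apply base.congr_fun ?_ measurableSet_Ioc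
      intro x hx; simp only [hKc x hx]
    · have e : ∫ t in Set.Ioc u v, K t ^ 2 = ∫ t in Set.Ioc u v, (t - c) ^ 2 := by
        apply setIntegral_congr_fun measurableSet_Ioc
        intro x hx; simp only [hKc x hx]
      rw [e, ← intervalIntegral.integral_of_le huv,
        show (fun t : ℝ => (t - c) ^ 2) = fun t => (fun x : ℝ => x ^ 2) (t - c) by rfl,
        intervalIntegral.integral_comp_sub_right (fun x : ℝ => x ^ 2) c,
        integral_pow]
      norm_num
  have k1 := hKsq a p a hap (fun x hx => by simp only [hK, if_pos hx.2])
  have k2 := hKsq p q m hpq (fun x hx => by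
    simp only [hK, if_neg (not_le.mpr hx.1), if_pos hx.2])
  have k3 := hKsq q b b hqb (fun x hx => by
    simp only [hK, if_neg (not_le.mpr (hpq.trans_lt hx.1)), if_neg (not_le.mpr hx.1)])
  have hIocsplit : Set.Ioc a b = Set.Ioc a p ∪ Set.Ioc p q ∪ Set.Ioc q b := by
    rw [Set.Ioc_union_Ioc_eq_Ioc hap hpq, Set.Ioc_union_Ioc_eq_Ioc haq hqb]
  have hK2int : Integrable (fun t => K t ^ 2) μ := by
    rw [hμ, hIocsplit]
    exact (k1.1.union k2.1).union k3.1
  have hd1 : Disjoint (Set.Ioc a p) (Set.Ioc p q) := Set.Ioc_disjoint_Ioc_of_le le_rfl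
  have hd2 : Disjoint (Set.Ioc a p ∪ Set.Ioc p q) (Set.Ioc q b) := by
    rw [Set.Ioc_union_Ioc_eq_Ioc hap hpq]
    exact Set.Ioc_disjoint_Ioc_of_le le_rfl
  have hK2val : ∫ x, K x ^ 2 ∂μ = (b - a) ^ 3 / 48 := by
    rw [hμ, hIocsplit,
      setIntegral_union hd2 measurableSet_Ioc (k1.1.union k2.1) k3.1,
      setIntegral_union hd1 measurableSet_Ioc k1.1 k2.1,
      k1.2, k2.2, k3.2, hp, hq, hm]
    ring
  -- integrability and value of g^2
  have hf'int : Integrable f' μ := by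
    rw [hμ]; exact (intervalIntegrable_iff_integrableOn_Ioc_of_le hab.le).mp hint
  have hL2' : Integrable (fun t => f' t ^ 2) μ := by
    rw [hμ]; exact (intervalIntegrable_iff_integrableOn_Ioc_of_le hab.le).mp hL2
  have hg2eq : (fun x => g x ^ 2) = fun x => f' x ^ 2 - (2 * c₀) * f' x + c₀ ^ 2 := by
    funext x; simp only [hg]; ring
  have hg2int : Integrable (fun x => g x ^ 2) μ := by
    rw [hg2eq]
    exact (hL2'.sub (hf'int.const_mul _)).add (integrable_const _)
  have hμuniv : (μ Set.univ).toReal = b - a := by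
    rw [hμ, Measure.restrict_apply_univ, Real.volume_Ioc, ENNReal.toReal_ofReal hA.le]
  have hintf' : ∫ x, f' x ∂μ = f b - f a := by
    rw [hμ, ← intervalIntegral.integral_of_le hab.le]
    exact (hftc b ⟨hab.le, le_rfl⟩).symm
  have hf'sqval : ∫ x, f' x ^ 2 ∂μ = ∫ t in a..b, f' t ^ 2 := by
    rw [hμ, intervalIntegral.integral_of_le hab.le]
  have hq1 : Integrable (fun x => f' x ^ 2 - (2 * c₀) * f' x) μ :=
    hL2'.sub (hf'int.const_mul _)
  have hq2 : Integrable (fun x => (2 * c₀) * f' x) μ := hf'int.const_mul _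
  have hg2val : ∫ x, g x ^ 2 ∂μ = σ := by
    rw [hg2eq, integral_add hq1 (integrable_const _),
      integral_sub hL2' hq2, MeasureTheory.integral_const_mul, MeasureTheory.integral_const,
      smul_eq_mul, hintf', measureReal_def, hμuniv, hf'sqval, hσ, hc₀]
    field_simp
    ring
  -- Cauchy–Schwarz
  have hcs := ostr_cs K g hKm.aestronglyMeasurable hgm hK2int hg2int
  rw [hK2val, hg2val] at hcs
  have hIabs : |(b - a) / 2 * (f p + f q) - ∫ t in a..b, f t|
      ≤ Real.sqrt ((b - a) ^ 3 / 48) * Real.sqrt σ := by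
    rw [← hIval, ← hIoc]
    exact hcs
  have h3pos : (0:ℝ) < Real.sqrt 3 := Real.sqrt_pos.mpr (by norm_num)
  have hconst : 1 / (b - a) * Real.sqrt ((b - a) ^ 3 / 48)
      = Real.sqrt (b - a) / (4 * Real.sqrt 3) := by
    have he : (b - a) ^ 3 / 48 = ((b - a) / (4 * Real.sqrt 3)) ^ 2 * (b - a) := by
      rw [div_pow, mul_pow, Real.sq_sqrt (by norm_num : (0:ℝ) ≤ 3)]
      ring
    rw [he, Real.sqrt_mul (sq_nonneg _), Real.sqrt_sq (by positivity)]
    field_simp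
  have habseq : (f p + f q) / 2 - 1 / (b - a) * ∫ t in a..b, f t
      = 1 / (b - a) * ((b - a) / 2 * (f p + f q) - ∫ t in a..b, f t) := by
    field_simp
  rw [habseq, abs_mul, abs_of_nonneg (by positivity : (0:ℝ) ≤ 1 / (b - a))]
  calc 1 / (b - a) * |(b - a) / 2 * (f p + f q) - ∫ t in a..b, f t|
      ≤ 1 / (b - a) * (Real.sqrt ((b - a) ^ 3 / 48) * Real.sqrt σ) := by
        apply mul_le_mul_of_nonneg_left hIabs (by positivity)
    _ = Real.sqrt (b - a) / (4 * Real.sqrt 3) * Real.sqrt σ := by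
        rw [← mul_assoc, hconst]
end

section
/- Let a < b be real numbers and let f : [a,b] → ℝ be absolutely continuous on [a,b] with f' ∈ L²[a,b]. Set σ(f') = ‖f'‖₂² − (f(b) − f(a))²/(b − a). Then |(f(a) + f(b))/2 − (1/(b−a)) ∫_a^b f(t) dt| ≤ ((b−a)^{1/2}/(2√3)) · √(σ(f')). -/
open MeasureTheory Set

lemma fubini_primitive {a b : ℝ} (hab : a ≤ b) {φ : ℝ → ℝ}
    (hφ : IntervalIntegrable φ volume a b) :
    (∫ x in a..b, (∫ t in a..x, φ t)) = ∫ t in a..b, (b - t) * φ t := by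
  set μ := volume.restrict (Ioc a b) with hμ
  have hφ1 : Integrable φ μ := hφ.1
  have hs : MeasurableSet {q : ℝ × ℝ | q.2 ≤ q.1} :=
    measurableSet_le measurable_snd measurable_fst
  have hone : Integrable (fun _ : ℝ => (1:ℝ)) μ := by
    rw [hμ]
    exact integrableOn_const measure_Ioc_lt_top.ne
  have hG : Integrable (fun p : ℝ × ℝ => φ p.2) (μ.prod μ) := by
    simpa using hone.mul_prod hφ1
  have hF : Integrable ({q : ℝ × ℝ | q.2 ≤ q.1}.indicator (fun q => φ q.2)) (μ.prod μ) :=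
    hG.indicator hs
  have hswap :
      (∫ x, ∫ t, {q : ℝ × ℝ | q.2 ≤ q.1}.indicator (fun q => φ q.2) (x, t) ∂μ ∂μ)
        = ∫ t, ∫ x, {q : ℝ × ℝ | q.2 ≤ q.1}.indicator (fun q => φ q.2) (x, t) ∂μ ∂μ :=
    integral_integral_swap hF
  have hleft : (∫ x, ∫ t, {q : ℝ × ℝ | q.2 ≤ q.1}.indicator (fun q => φ q.2) (x, t) ∂μ ∂μ)
      = ∫ x in a..b, (∫ t in a..x, φ t) := by
    rw [intervalIntegral.integral_of_le hab, hμ]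
    refine setIntegral_congr_fun measurableSet_Ioc (fun x hx => ?_)
    have h1 : (fun t => {q : ℝ × ℝ | q.2 ≤ q.1}.indicator (fun q => φ q.2) (x, t))
        = (Iic x).indicator φ := by
      funext t
      by_cases h : t ≤ x <;> simp [Set.indicator, h]
    have hset : Iic x ∩ Ioc a b = Ioc a x := by
      ext y
      simp only [mem_inter_iff, mem_Iic, mem_Ioc]
      constructor
      · rintro ⟨h1, h2, h3⟩; exact ⟨h2, h1⟩
      · rintro ⟨h1, h2⟩; exact ⟨h2, h1, h2.trans hx.2⟩
    rw [h1, integral_indicator measurableSet_Iic, Measure.restrict_restrict measurableSet_Iic,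
      hset, intervalIntegral.integral_of_le hx.1.le]
  have hright : (∫ t, ∫ x, {q : ℝ × ℝ | q.2 ≤ q.1}.indicator (fun q => φ q.2) (x, t) ∂μ ∂μ)
      = ∫ t in a..b, (b - t) * φ t := by
    rw [intervalIntegral.integral_of_le hab]
    refine setIntegral_congr_fun measurableSet_Ioc (fun t ht => ?_)
    have h1 : (fun x => {q : ℝ × ℝ | q.2 ≤ q.1}.indicator (fun q => φ q.2) (x, t))
        = (Ici t).indicator (fun _ => φ t) := by
      funext x
      by_cases h : t ≤ x <;> simp [Set.indicator, h]
    have hset : Ici t ∩ Ioc a b = Icc t b := by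
      ext y
      simp only [mem_inter_iff, mem_Ici, mem_Ioc, mem_Icc]
      constructor
      · rintro ⟨h1, h2, h3⟩; exact ⟨h1, h3⟩
      · rintro ⟨h1, h2⟩; exact ⟨h1, ht.1.trans_le h1, h2⟩
    rw [h1, integral_indicator_const _ measurableSet_Ici,
      measureReal_def, hμ, Measure.restrict_apply measurableSet_Ici, hset, Real.volume_Icc,
      ENNReal.toReal_ofReal (by linarith [ht.2] : (0:ℝ) ≤ b - t)]
    simp [smul_eq_mul]
  rw [← hleft, hswap, hright]
open MeasureTheory Set

lemma cs_interval {a b : ℝ} (hab : a ≤ b) {g h : ℝ → ℝ}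
    (hg2 : IntervalIntegrable (fun t => g t ^ 2) volume a b)
    (hh2 : IntervalIntegrable (fun t => h t ^ 2) volume a b)
    (hgh : IntervalIntegrable (fun t => g t * h t) volume a b) :
    (∫ t in a..b, g t * h t) ^ 2 ≤ (∫ t in a..b, g t ^ 2) * (∫ t in a..b, h t ^ 2) := by
  set A := ∫ t in a..b, g t ^ 2 with hA
  set B := ∫ t in a..b, g t * h t with hB
  set C := ∫ t in a..b, h t ^ 2 with hC
  have key : discrim A (2 * B) C ≤ 0 := by
    apply discrim_le_zero
    intro x
    have heq : A * (x * x) + 2 * B * x + C = ∫ t in a..b, (x * g t + h t) ^ 2 := by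
      have : (fun t => (x * g t + h t) ^ 2)
          = fun t => (x * x) * g t ^ 2 + ((2 * x) * (g t * h t) + h t ^ 2) := by
        funext t; ring
      rw [this, intervalIntegral.integral_add (hg2.const_mul _)
          ((hgh.const_mul _).add hh2),
        intervalIntegral.integral_add (hgh.const_mul _) hh2,
        intervalIntegral.integral_const_mul, intervalIntegral.integral_const_mul,
        ← hA, ← hB, ← hC]
      ring
    rw [heq]
    exact intervalIntegral.integral_nonneg hab (fun t _ => sq_nonneg _)
  rw [discrim] at key
  nlinarith [key]

/-- **Sharp trapezoid inequality for `f' ∈ L²[a,b]`** (Corollary of Theorem 2.3, inequality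
(2.35)): with `σ(f') = ∫_a^b f'(t)² dt - (f b - f a)²/(b - a)`,
`|(f a + f b)/2 - (1/(b-a)) ∫_a^b f| ≤ (√(b-a)/(2√3)) √(σ(f'))`. -/
theorem companion_ostrowski_first_deriv_L2_trapezoid
    (a b : ℝ) (hab : a < b) (f f' : ℝ → ℝ)
    (hcont : ContinuousOn f (Set.Icc a b))
    (hint : IntervalIntegrable f' MeasureTheory.volume a b)
    (hftc : ∀ x ∈ Set.Icc a b, f x - f a = ∫ t in a..x, f' t)
    (hL2 : IntervalIntegrable (fun t => (f' t) ^ 2) MeasureTheory.volume a b)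
    (σ : ℝ) (hσ : σ = (∫ t in a..b, (f' t) ^ 2) - (f b - f a) ^ 2 / (b - a)) :
    |(f a + f b) / 2 - (1 / (b - a)) * ∫ t in a..b, f t|
      ≤ Real.sqrt (b - a) / (2 * Real.sqrt 3) * Real.sqrt σ := by
  have hab' : a ≤ b := hab.le
  have hba : (0:ℝ) < b - a := by linarith
  set m : ℝ := (a + b) / 2 with hm
  set I : ℝ := ∫ t in a..b, f' t with hI
  set c : ℝ := I / (b - a) with hc
  set J : ℝ := ∫ t in a..b, (b - t) * f' t with hJ
  set K : ℝ := ∫ t in a..b, (t - m) * (f' t - c) with hK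
  have hIb : f b - f a = I := hftc b ⟨hab', le_refl b⟩
  have hfint : IntervalIntegrable f volume a b :=
    (hcont.mono (by rw [uIcc_of_le hab'])).intervalIntegrable
  have hJint : IntervalIntegrable (fun t => (b - t) * f' t) volume a b :=
    hint.continuousOn_mul ((continuous_const.sub continuous_id).continuousOn)
  have hKint : IntervalIntegrable (fun t => (t - m) * (f' t - c)) volume a b :=
    (hint.sub intervalIntegrable_const).continuousOn_mul
      ((continuous_id.sub continuous_const).continuousOn)
  -- integral of f
  have h5 : (∫ t in a..b, f t) = (b - a) * f a + J := by
    have h5a : (∫ t in a..b, f t) - (b - a) * f a = ∫ x in a..b, (f x - f a) := by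
      rw [intervalIntegral.integral_sub hfint intervalIntegrable_const,
        intervalIntegral.integral_const, smul_eq_mul]
    have h5b : (∫ x in a..b, (f x - f a)) = J := by
      rw [intervalIntegral.integral_congr
          (g := fun x => ∫ t in a..x, f' t) (fun x hx => hftc x (by rwa [uIcc_of_le hab'] at hx)),
        hJ]
      exact fubini_primitive hab' hint
    linarith [h5a, h5b]
  -- mean zero
  have hgm : (∫ t in a..b, (t - m)) = 0 := by
    rw [intervalIntegral.integral_sub intervalIntegral.intervalIntegrable_id
      intervalIntegrable_const, integral_id, intervalIntegral.integral_const,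
      smul_eq_mul, hm]
    ring
  -- value of K
  have hKval : K = (b - a) / 2 * I - J := by
    have he : (fun t => (t - m) * (f' t - c))
        = fun t => ((b - a) / 2 * f' t - (b - t) * f' t) - c * (t - m) := by
      funext t; rw [hm]; ring
    rw [hK, he, intervalIntegral.integral_sub
        ((hint.const_mul _).sub hJint)
        ((intervalIntegral.intervalIntegrable_id.sub intervalIntegrable_const).const_mul _),
      intervalIntegral.integral_sub (hint.const_mul _) hJint,
      intervalIntegral.integral_const_mul, intervalIntegral.integral_const_mul, hgm, ← hI]
    ring
  -- ∫ g²
  have hg2val : (∫ t in a..b, (t - m) ^ 2) = (b - a) ^ 3 / 12 := by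
    rw [intervalIntegral.integral_comp_sub_right (fun x => x ^ 2) m, integral_pow, hm]
    push_cast
    ring
  -- ∫ h² = σ
  have hh2int : IntervalIntegrable (fun t => (f' t - c) ^ 2) volume a b := by
    have he : (fun t => (f' t - c) ^ 2)
        = fun t => f' t ^ 2 - ((2 * c) * f' t - c ^ 2) := by funext t; ring
    rw [he]
    exact hL2.sub ((hint.const_mul _).sub intervalIntegrable_const)
  have hh2val : (∫ t in a..b, (f' t - c) ^ 2) = σ := by
    have he : (fun t => (f' t - c) ^ 2)
        = fun t => f' t ^ 2 - ((2 * c) * f' t - c ^ 2) := by funext t; ring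
    rw [he, intervalIntegral.integral_sub hL2
        ((hint.const_mul _).sub intervalIntegrable_const),
      intervalIntegral.integral_sub (hint.const_mul _) intervalIntegrable_const,
      intervalIntegral.integral_const_mul, intervalIntegral.integral_const, ← hI,
      smul_eq_mul, hσ, hIb, hc]
    field_simp
    ring
  have hσ0 : 0 ≤ σ := by
    rw [← hh2val]
    exact intervalIntegral.integral_nonneg hab' (fun t _ => sq_nonneg _)
  -- Cauchy-Schwarz
  have hcs : K ^ 2 ≤ (b - a) ^ 3 / 12 * σ := by
    have := cs_interval hab' (g := fun t => t - m) (h := fun t => f' t - c)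
      (((continuous_id.sub continuous_const).pow 2).intervalIntegrable a b)
      hh2int hKint
    rwa [hg2val, hh2val] at this
  -- from K² bound to |K| bound
  have habs : |K| ≤ Real.sqrt ((b - a) ^ 3 / 12) * Real.sqrt σ := by
    rw [← Real.sqrt_sq_eq_abs, ← Real.sqrt_mul (by positivity)]
    exact Real.sqrt_le_sqrt hcs
  -- simplify the sqrt constant
  have h12 : Real.sqrt ((b - a) ^ 3 / 12)
      = Real.sqrt (b - a) / (2 * Real.sqrt 3) * (b - a) := by
    have hs12 : Real.sqrt 12 = 2 * Real.sqrt 3 := by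
      rw [show (12:ℝ) = 2 ^ 2 * 3 by norm_num, Real.sqrt_mul (by positivity),
        Real.sqrt_sq (by norm_num)]
    rw [show (b - a) ^ 3 / 12 = ((b - a) / 12) * (b - a) ^ 2 by ring,
      Real.sqrt_mul (by positivity), Real.sqrt_sq hba.le,
      Real.sqrt_div hba.le, hs12]
  -- error as K/(b-a)
  have hE : (f a + f b) / 2 - (1 / (b - a)) * ∫ t in a..b, f t = K / (b - a) := by
    rw [h5, hKval]
    have : f b = f a + I := by linarith [hIb]
    rw [this]
    field_simp
    ring
  rw [hE, abs_div, abs_of_pos hba, div_le_iff₀ hba]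
  calc |K| ≤ Real.sqrt ((b - a) ^ 3 / 12) * Real.sqrt σ := habs
    _ = Real.sqrt (b - a) / (2 * Real.sqrt 3) * Real.sqrt σ * (b - a) := by rw [h12]; ring
end

section
/- Let a < b be real numbers and let f : [a,b] → ℝ be absolutely continuous on [a,b] with f' ∈ L²[a,b], and assume f is symmetric about the line x = (a+b)/2, i.e., f(a+b−x) = f(x) for all x ∈ [a,b]. Set σ(f') = ‖f'‖₂² − (f(b) − f(a))²/(b − a). Then for all x ∈ [a, (a+b)/2], |f(x) − (1/(b−a)) ∫_a^b f(t) dt| ≤ (b−a)^{−1/2} · [ (b−a)²/48 + (x − (3a+b)/4)² ]^{1/2} · √(σ(f')). -/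
open MeasureTheory Set intervalIntegral

lemma fubini_step (a b : ℝ) (hab : a ≤ b) (g : ℝ → ℝ)
    (hg : IntegrableOn g (Set.Ioc a b)) :
    ∫ t in Set.Ioc a b, (∫ s in Set.Ioc a t, g s) = ∫ s in Set.Ioc a b, (b - s) * g s := by
  set μ := volume.restrict (Set.Ioc a b) with hμ
  have hmeasS : MeasurableSet {p : ℝ × ℝ | a < p.2 ∧ p.2 ≤ p.1} :=
    (measurableSet_lt measurable_const measurable_snd).inter
      (measurableSet_le measurable_snd measurable_fst)
  have hFeq : (fun p : ℝ × ℝ => Set.indicator (Set.Ioc a p.1) g p.2)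
      = Set.indicator {p : ℝ × ℝ | a < p.2 ∧ p.2 ≤ p.1} (fun p => g p.2) := by
    funext p
    by_cases h : p.2 ∈ Set.Ioc a p.1
    · rw [Set.indicator_of_mem h, Set.indicator_of_mem]
      exact ⟨h.1, h.2⟩
    · rw [Set.indicator_of_notMem h, Set.indicator_of_notMem]
      exact fun hh => h ⟨hh.1, hh.2⟩
  have hsm : AEStronglyMeasurable (fun p : ℝ × ℝ => Set.indicator (Set.Ioc a p.1) g p.2)
      (μ.prod μ) := by
    rw [hFeq]
    exact (hg.aestronglyMeasurable.comp_snd).indicator hmeasS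
  have hInt : Integrable (fun p : ℝ × ℝ => Set.indicator (Set.Ioc a p.1) g p.2) (μ.prod μ) := by
    rw [integrable_prod_iff hsm]
    constructor
    · filter_upwards with t
      exact hg.indicator measurableSet_Ioc
    · apply Integrable.mono' (integrable_const (∫ s, ‖g s‖ ∂μ))
        (hsm.norm.integral_prod_right')
      filter_upwards with t
      rw [Real.norm_eq_abs, abs_of_nonneg (integral_nonneg (fun s => norm_nonneg _))]
      apply integral_mono_of_nonneg (Filter.Eventually.of_forall fun s => norm_nonneg _)
        hg.norm
      filter_upwards with s
      exact norm_indicator_le_norm_self g s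
  have swap := MeasureTheory.integral_integral_swap (f := fun t s => Set.indicator (Set.Ioc a t) g s) (μ := μ) (ν := μ) hInt
  have hL : ∫ t in Set.Ioc a b, (∫ s in Set.Ioc a t, g s)
      = ∫ t, (∫ s, Set.indicator (Set.Ioc a t) g s ∂μ) ∂μ := by
    rw [hμ]
    apply setIntegral_congr_fun measurableSet_Ioc
    intro t ht
    show (∫ s in Set.Ioc a t, g s) = ∫ s in Set.Ioc a b, Set.indicator (Set.Ioc a t) g s
    rw [MeasureTheory.integral_indicator measurableSet_Ioc,
      Measure.restrict_restrict measurableSet_Ioc, Set.Ioc_inter_Ioc]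
    congr 2 <;> simp [ht.2]
  have hR : (∫ s, (∫ t, Set.indicator (Set.Ioc a t) g s ∂μ) ∂μ)
      = ∫ s in Set.Ioc a b, (b - s) * g s := by
    rw [hμ]
    apply setIntegral_congr_fun measurableSet_Ioc
    intro s hs
    show (∫ t in Set.Ioc a b, Set.indicator (Set.Ioc a t) g s) = (b - s) * g s
    have h1 : ∀ t, Set.indicator (Set.Ioc a t) g s
        = Set.indicator (Set.Ici s) (fun _ => g s) t := by
      intro t
      by_cases h : s ≤ t
      · rw [Set.indicator_of_mem (Set.mem_Ioc.2 ⟨hs.1, h⟩), Set.indicator_of_mem (Set.mem_Ici.2 h)]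
      · rw [Set.indicator_of_notMem (fun hh => h hh.2),
          Set.indicator_of_notMem (fun hh => h (Set.mem_Ici.1 hh))]
    simp_rw [h1]
    rw [MeasureTheory.integral_indicator measurableSet_Ici,
      Measure.restrict_restrict measurableSet_Ici, setIntegral_const]
    have h2 : Set.Ici s ∩ Set.Ioc a b = Set.Icc s b := by
      ext t
      simp only [Set.mem_inter_iff, Set.mem_Ici, Set.mem_Ioc, Set.mem_Icc]
      exact ⟨fun h => ⟨h.1, h.2.2⟩, fun h => ⟨h.1, lt_of_lt_of_le hs.1 h.1, h.2⟩⟩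
    rw [h2, Real.volume_real_Icc_of_le (by linarith [hs.2] : s ≤ b)]
    rw [smul_eq_mul]
  rw [hL, swap, hR]

lemma montgomery (a b : ℝ) (hab : a ≤ b) (f f' : ℝ → ℝ)
    (hint : IntervalIntegrable f' MeasureTheory.volume a b)
    (hfint : IntervalIntegrable f MeasureTheory.volume a b)
    (hftc : ∀ x ∈ Set.Icc a b, f x - f a = ∫ t in a..x, f' t)
    (y : ℝ) (hy : y ∈ Set.Icc a b) :
    (b - a) * f y - ∫ t in a..b, f t
      = (∫ t in a..y, (t - a) * f' t) + ∫ t in y..b, (t - b) * f' t := by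
  have hIoc : IntegrableOn f' (Set.Ioc a b) := by
    simpa [intervalIntegrable_iff, Set.uIoc_of_le hab] using hint
  have step1 : (∫ t in a..b, (b - t) * f' t) = (∫ t in a..b, f t) - (b - a) * f a := by
    rw [intervalIntegral.integral_of_le hab, ← fubini_step a b hab f' hIoc]
    have : ∀ t ∈ Set.Ioc a b, (∫ s in Set.Ioc a t, f' s) = f t - f a := by
      intro t ht
      rw [← intervalIntegral.integral_of_le ht.1.le]
      exact (hftc t ⟨ht.1.le, ht.2⟩).symm
    rw [MeasureTheory.setIntegral_congr_fun measurableSet_Ioc this]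
    rw [← intervalIntegral.integral_of_le hab, intervalIntegral.integral_sub hfint
      intervalIntegrable_const, intervalIntegral.integral_const, smul_eq_mul]
  -- integrability of pieces
  have hcont1 : ∀ c : ℝ, IntervalIntegrable (fun t => (t - c) * f' t) MeasureTheory.volume a b := by
    intro c
    exact hint.continuousOn_mul (by fun_prop)
  have hsub1 : Set.uIcc a y ⊆ Set.uIcc a b := by
    rw [Set.uIcc_of_le hy.1, Set.uIcc_of_le hab]
    exact Set.Icc_subset_Icc le_rfl hy.2
  have hsub2 : Set.uIcc y b ⊆ Set.uIcc a b := by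
    rw [Set.uIcc_of_le hy.2, Set.uIcc_of_le hab]
    exact Set.Icc_subset_Icc hy.1 le_rfl
  have hay : ∀ c : ℝ, IntervalIntegrable (fun t => (t - c) * f' t) MeasureTheory.volume a y :=
    fun c => (hcont1 c).mono_set hsub1
  have hyb : ∀ c : ℝ, IntervalIntegrable (fun t => (t - c) * f' t) MeasureTheory.volume y b :=
    fun c => (hcont1 c).mono_set hsub2
  have hfay : IntervalIntegrable f' MeasureTheory.volume a y :=
    hint.mono_set hsub1
  have split : (∫ t in a..y, (t - a) * f' t)
      = (∫ t in a..y, (t - b) * f' t) + (b - a) * (f y - f a) := by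
    have : (∫ t in a..y, (t - a) * f' t)
        = ∫ t in a..y, ((t - b) * f' t + (b - a) * f' t) := by
      apply intervalIntegral.integral_congr
      intro t _
      ring
    rw [this, intervalIntegral.integral_add (hay b) (hfay.const_mul (b - a)),
      intervalIntegral.integral_const_mul, ← hftc y hy]
  have adj : (∫ t in a..y, (t - b) * f' t) + (∫ t in y..b, (t - b) * f' t)
      = ∫ t in a..b, (t - b) * f' t :=
    intervalIntegral.integral_add_adjacent_intervals (hay b) (hyb b)
  have neg : (∫ t in a..b, (t - b) * f' t) = -(∫ t in a..b, (b - t) * f' t) := by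
    rw [← intervalIntegral.integral_neg]
    apply intervalIntegral.integral_congr
    intro t _
    ring
  have := step1
  linarith [split, adj, neg, step1]

lemma cs_interval_s13 (a b : ℝ) (hab : a ≤ b) (u v : ℝ → ℝ)
    (hu2 : IntervalIntegrable (fun t => u t ^ 2) MeasureTheory.volume a b)
    (hv2 : IntervalIntegrable (fun t => v t ^ 2) MeasureTheory.volume a b)
    (huv : IntervalIntegrable (fun t => u t * v t) MeasureTheory.volume a b) :
    (∫ t in a..b, u t * v t) ^ 2
      ≤ (∫ t in a..b, u t ^ 2) * (∫ t in a..b, v t ^ 2) := by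
  set A := ∫ t in a..b, u t ^ 2 with hA
  set B := ∫ t in a..b, u t * v t with hB
  set C := ∫ t in a..b, v t ^ 2 with hC
  have expand : ∀ l : ℝ, (∫ t in a..b, (u t - l * v t) ^ 2)
      = A - 2 * l * B + l ^ 2 * C := by
    intro l
    have : (∫ t in a..b, (u t - l * v t) ^ 2)
        = ∫ t in a..b, (u t ^ 2 - 2 * l * (u t * v t) + l ^ 2 * v t ^ 2) := by
      apply intervalIntegral.integral_congr
      intro t _
      ring
    rw [this, intervalIntegral.integral_add (hu2.sub (huv.const_mul (2 * l)))
      (hv2.const_mul (l ^ 2)), intervalIntegral.integral_sub hu2 (huv.const_mul (2 * l)),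
      intervalIntegral.integral_const_mul, intervalIntegral.integral_const_mul]
  have hquad : ∀ l : ℝ, 0 ≤ C * (l * l) + (-2 * B) * l + A := by
    intro l
    have h0 : 0 ≤ ∫ t in a..b, (u t - l * v t) ^ 2 :=
      intervalIntegral.integral_nonneg hab (fun t _ => sq_nonneg _)
    rw [expand l] at h0
    nlinarith [h0]
  have hd := discrim_le_zero hquad
  rw [discrim] at hd
  nlinarith [hd]



/-- **Ostrowski type inequality for symmetric `f` with `f' ∈ L²[a,b]`** (Corollary 2.12,
inequality (2.37)): if additionally `f (a + b - x) = f x` on `[a,b]`, then for all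
`x ∈ [a, (a+b)/2]`, with `σ(f') = ∫_a^b f'(t)² dt - (f b - f a)²/(b - a)`,
`|f x - (1/(b-a)) ∫_a^b f| ≤ (b-a)^{-1/2} · √((b-a)²/48 + (x - (3a+b)/4)²) · √(σ(f'))`. -/
theorem companion_ostrowski_first_deriv_L2_symmetric
    (a b : ℝ) (hab : a < b) (f f' : ℝ → ℝ)
    (hcont : ContinuousOn f (Set.Icc a b))
    (hint : IntervalIntegrable f' MeasureTheory.volume a b)
    (hftc : ∀ x ∈ Set.Icc a b, f x - f a = ∫ t in a..x, f' t)
    (hL2 : IntervalIntegrable (fun t => (f' t) ^ 2) MeasureTheory.volume a b)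
    (hsym : ∀ x ∈ Set.Icc a b, f (a + b - x) = f x)
    (σ : ℝ) (hσ : σ = (∫ t in a..b, (f' t) ^ 2) - (f b - f a) ^ 2 / (b - a)) :
    ∀ x ∈ Set.Icc a ((a + b) / 2),
      |f x - (1 / (b - a)) * ∫ t in a..b, f t|
        ≤ (Real.sqrt (b - a))⁻¹ *
            Real.sqrt ((b - a) ^ 2 / 48 + (x - (3 * a + b) / 4) ^ 2) * Real.sqrt σ := by
  intro x hx
  have hab' : a ≤ b := hab.le
  set m : ℝ := (a + b) / 2 with hm
  set y : ℝ := a + b - x with hy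
  have hax : a ≤ x := hx.1
  have hxm : x ≤ m := hx.2
  have hxy : x ≤ y := by simp only [hy, hm] at *; linarith
  have hyb : y ≤ b := by simp only [hy]; linarith
  have hay : a ≤ y := le_trans (le_trans hax hxy) le_rfl
  have hxI : x ∈ Set.Icc a b := ⟨hax, le_trans hxy hyb⟩
  have hyI : y ∈ Set.Icc a b := ⟨hay, hyb⟩
  have hfba : f b = f a := by
    have := hsym a ⟨le_rfl, hab'⟩
    simpa using this
  have hfyx : f y = f x := hsym x hxI
  have hfint : IntervalIntegrable f MeasureTheory.volume a b := by
    apply ContinuousOn.intervalIntegrable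
    rwa [Set.uIcc_of_le hab']
  -- kernel integrability helper
  have hker : ∀ (c p q : ℝ), Set.uIcc p q ⊆ Set.uIcc a b →
      IntervalIntegrable (fun t => (t - c) * f' t) MeasureTheory.volume p q := by
    intro c p q hsub
    exact (hint.continuousOn_mul (by fun_prop)).mono_set hsub
  have hsub_ax : Set.uIcc a x ⊆ Set.uIcc a b := by
    rw [Set.uIcc_of_le hax, Set.uIcc_of_le hab']
    exact Set.Icc_subset_Icc le_rfl hxI.2
  have hsub_xy : Set.uIcc x y ⊆ Set.uIcc a b := by
    rw [Set.uIcc_of_le hxy, Set.uIcc_of_le hab']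
    exact Set.Icc_subset_Icc hax hyb
  have hsub_yb : Set.uIcc y b ⊆ Set.uIcc a b := by
    rw [Set.uIcc_of_le hyb, Set.uIcc_of_le hab']
    exact Set.Icc_subset_Icc hay le_rfl
  have hsub_xb : Set.uIcc x b ⊆ Set.uIcc a b := by
    rw [Set.uIcc_of_le (le_trans hxy hyb), Set.uIcc_of_le hab']
    exact Set.Icc_subset_Icc hax le_rfl
  have hsub_ay : Set.uIcc a y ⊆ Set.uIcc a b := by
    rw [Set.uIcc_of_le hay, Set.uIcc_of_le hab']
    exact Set.Icc_subset_Icc le_rfl hyb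
  -- the averaged kernel
  set M : ℝ → ℝ := fun t => if t ≤ x then t - a else if t ≤ y then t - m else t - b with hM
  have hM1 : ∀ t ∈ Set.Ioc a x, M t = t - a := by
    intro t ht
    simp only [hM]
    rw [if_pos ht.2]
  have hM2 : ∀ t ∈ Set.Ioc x y, M t = t - m := by
    intro t ht
    simp only [hM]
    rw [if_neg (not_le.2 ht.1), if_pos ht.2]
  have hM3 : ∀ t ∈ Set.Ioc y b, M t = t - b := by
    intro t ht
    simp only [hM]
    rw [if_neg (not_le.2 (lt_of_le_of_lt hxy ht.1)), if_neg (not_le.2 ht.1)]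
  -- Montgomery at x and y
  have mx := montgomery a b hab' f f' hint hfint hftc x hxI
  have my := montgomery a b hab' f f' hint hfint hftc y hyI
  rw [hfyx] at my
  -- split integrals
  have adj1 : (∫ t in x..y, (t - b) * f' t) + (∫ t in y..b, (t - b) * f' t)
      = ∫ t in x..b, (t - b) * f' t :=
    intervalIntegral.integral_add_adjacent_intervals (hker b x y hsub_xy) (hker b y b hsub_yb)
  have adj2 : (∫ t in a..x, (t - a) * f' t) + (∫ t in x..y, (t - a) * f' t)
      = ∫ t in a..y, (t - a) * f' t :=
    intervalIntegral.integral_add_adjacent_intervals (hker a a x hsub_ax) (hker a x y hsub_xy)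
  have mid : (∫ t in x..y, (t - a) * f' t) + (∫ t in x..y, (t - b) * f' t)
      = 2 * ∫ t in x..y, (t - m) * f' t := by
    rw [← intervalIntegral.integral_add (hker a x y hsub_xy) (hker b x y hsub_xy)]
    rw [← intervalIntegral.integral_const_mul]
    apply intervalIntegral.integral_congr
    intro t _
    simp only [hm]
    ring
  -- identity: (b-a) f x - ∫ f = sum of three kernel integrals
  have key : (b - a) * f x - (∫ t in a..b, f t)
      = (∫ t in a..x, (t - a) * f' t) + (∫ t in x..y, (t - m) * f' t)
        + (∫ t in y..b, (t - b) * f' t) := by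
    linarith [mx, my, adj1, adj2, mid]
  -- integrability of M * f' and M^2 on pieces
  have hMf1 : IntervalIntegrable (fun t => M t * f' t) MeasureTheory.volume a x := by
    rw [intervalIntegrable_iff, Set.uIoc_of_le hax]
    have h0 : MeasureTheory.IntegrableOn (fun t => (t - a) * f' t) (Set.Ioc a x) := by
      have := hker a a x hsub_ax
      rwa [intervalIntegrable_iff, Set.uIoc_of_le hax] at this
    exact h0.congr_fun (fun t ht => by rw [hM1 t ht]) measurableSet_Ioc
  have hMf2 : IntervalIntegrable (fun t => M t * f' t) MeasureTheory.volume x y := by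
    rw [intervalIntegrable_iff, Set.uIoc_of_le hxy]
    have h0 : MeasureTheory.IntegrableOn (fun t => (t - m) * f' t) (Set.Ioc x y) := by
      have := hker m x y hsub_xy
      rwa [intervalIntegrable_iff, Set.uIoc_of_le hxy] at this
    exact h0.congr_fun (fun t ht => by rw [hM2 t ht]) measurableSet_Ioc
  have hMf3 : IntervalIntegrable (fun t => M t * f' t) MeasureTheory.volume y b := by
    rw [intervalIntegrable_iff, Set.uIoc_of_le hyb]
    have h0 : MeasureTheory.IntegrableOn (fun t => (t - b) * f' t) (Set.Ioc y b) := by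
      have := hker b y b hsub_yb
      rwa [intervalIntegrable_iff, Set.uIoc_of_le hyb] at this
    exact h0.congr_fun (fun t ht => by rw [hM3 t ht]) measurableSet_Ioc
  have hMf : IntervalIntegrable (fun t => M t * f' t) MeasureTheory.volume a b :=
    (hMf1.trans hMf2).trans hMf3
  have hsq : ∀ (c p q : ℝ), IntervalIntegrable (fun t => (t - c) ^ 2) MeasureTheory.volume p q :=
    fun c p q => (by fun_prop : Continuous fun t : ℝ => (t - c) ^ 2).intervalIntegrable p q
  have hM21 : IntervalIntegrable (fun t => M t ^ 2) MeasureTheory.volume a x := by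
    rw [intervalIntegrable_iff, Set.uIoc_of_le hax]
    have h0 : MeasureTheory.IntegrableOn (fun t => (t - a) ^ 2) (Set.Ioc a x) := by
      have := hsq a a x
      rwa [intervalIntegrable_iff, Set.uIoc_of_le hax] at this
    exact h0.congr_fun (fun t ht => by rw [hM1 t ht]) measurableSet_Ioc
  have hM22 : IntervalIntegrable (fun t => M t ^ 2) MeasureTheory.volume x y := by
    rw [intervalIntegrable_iff, Set.uIoc_of_le hxy]
    have h0 : MeasureTheory.IntegrableOn (fun t => (t - m) ^ 2) (Set.Ioc x y) := by
      have := hsq m x y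
      rwa [intervalIntegrable_iff, Set.uIoc_of_le hxy] at this
    exact h0.congr_fun (fun t ht => by rw [hM2 t ht]) measurableSet_Ioc
  have hM23 : IntervalIntegrable (fun t => M t ^ 2) MeasureTheory.volume y b := by
    rw [intervalIntegrable_iff, Set.uIoc_of_le hyb]
    have h0 : MeasureTheory.IntegrableOn (fun t => (t - b) ^ 2) (Set.Ioc y b) := by
      have := hsq b y b
      rwa [intervalIntegrable_iff, Set.uIoc_of_le hyb] at this
    exact h0.congr_fun (fun t ht => by rw [hM3 t ht]) measurableSet_Ioc
  have hM2int : IntervalIntegrable (fun t => M t ^ 2) MeasureTheory.volume a b :=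
    (hM21.trans hM22).trans hM23
  -- ∫ M f' equals the sum of three kernel integrals
  have eMf1 : (∫ t in a..x, M t * f' t) = ∫ t in a..x, (t - a) * f' t := by
    rw [intervalIntegral.integral_of_le hax, intervalIntegral.integral_of_le hax]
    exact MeasureTheory.setIntegral_congr_fun measurableSet_Ioc
      (fun t ht => by rw [hM1 t ht])
  have eMf2 : (∫ t in x..y, M t * f' t) = ∫ t in x..y, (t - m) * f' t := by
    rw [intervalIntegral.integral_of_le hxy, intervalIntegral.integral_of_le hxy]
    exact MeasureTheory.setIntegral_congr_fun measurableSet_Ioc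
      (fun t ht => by rw [hM2 t ht])
  have eMf3 : (∫ t in y..b, M t * f' t) = ∫ t in y..b, (t - b) * f' t := by
    rw [intervalIntegral.integral_of_le hyb, intervalIntegral.integral_of_le hyb]
    exact MeasureTheory.setIntegral_congr_fun measurableSet_Ioc
      (fun t ht => by rw [hM3 t ht])
  have eMf : (∫ t in a..b, M t * f' t)
      = (∫ t in a..x, (t - a) * f' t) + (∫ t in x..y, (t - m) * f' t)
        + (∫ t in y..b, (t - b) * f' t) := by
    rw [← intervalIntegral.integral_add_adjacent_intervals (hMf1.trans hMf2) hMf3,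
      ← intervalIntegral.integral_add_adjacent_intervals hMf1 hMf2, eMf1, eMf2, eMf3]
  -- compute ∫ M^2
  have pc : ∀ (c p q : ℝ), (∫ t in p..q, (t - c) ^ 2) = ((q - c) ^ 3 - (p - c) ^ 3) / 3 := by
    intro c p q
    rw [intervalIntegral.integral_comp_sub_right (fun u => u ^ 2) c, integral_pow]
    norm_num
  have eM21 : (∫ t in a..x, M t ^ 2) = ((x - a) ^ 3 - 0) / 3 := by
    rw [intervalIntegral.integral_of_le hax,
      MeasureTheory.setIntegral_congr_fun measurableSet_Ioc
        (fun t (ht : t ∈ Set.Ioc a x) => by rw [hM1 t ht]),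
      ← intervalIntegral.integral_of_le hax, pc a a x]
    ring
  have eM22 : (∫ t in x..y, M t ^ 2) = ((y - m) ^ 3 - (x - m) ^ 3) / 3 := by
    rw [intervalIntegral.integral_of_le hxy,
      MeasureTheory.setIntegral_congr_fun measurableSet_Ioc
        (fun t (ht : t ∈ Set.Ioc x y) => by rw [hM2 t ht]),
      ← intervalIntegral.integral_of_le hxy, pc m x y]
  have eM23 : (∫ t in y..b, M t ^ 2) = (0 - (y - b) ^ 3) / 3 := by
    rw [intervalIntegral.integral_of_le hyb,
      MeasureTheory.setIntegral_congr_fun measurableSet_Ioc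
        (fun t (ht : t ∈ Set.Ioc y b) => by rw [hM3 t ht]),
      ← intervalIntegral.integral_of_le hyb, pc b y b]
    ring
  have eM2 : (∫ t in a..b, M t ^ 2)
      = (b - a) * ((b - a) ^ 2 / 48 + (x - (3 * a + b) / 4) ^ 2) := by
    rw [← intervalIntegral.integral_add_adjacent_intervals (hM21.trans hM22) hM23,
      ← intervalIntegral.integral_add_adjacent_intervals hM21 hM22, eM21, eM22, eM23]
    simp only [hy, hm]
    ring
  -- σ is the L² norm squared of f'
  have hσ' : σ = ∫ t in a..b, (f' t) ^ 2 := by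
    rw [hσ, hfba]
    simp
  have hσnn : 0 ≤ σ := by
    rw [hσ']
    exact intervalIntegral.integral_nonneg hab' (fun t _ => sq_nonneg _)
  -- Cauchy-Schwarz
  have hcs := cs_interval_s13 a b hab' M f' hM2int hL2 hMf
  rw [eM2, ← hσ'] at hcs
  set A := (b - a) * f x - (∫ t in a..b, f t) with hA
  have hAe : A = ∫ t in a..b, M t * f' t := key.trans eMf.symm
  set E := (b - a) ^ 2 / 48 + (x - (3 * a + b) / 4) ^ 2 with hE
  have hEnn : 0 ≤ E := by positivity
  have hA2 : A ^ 2 ≤ (b - a) * E * σ := by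
    rw [hAe]
    exact hcs
  have hba : (0:ℝ) < b - a := by linarith
  have habs : |A| ≤ Real.sqrt (b - a) * Real.sqrt E * Real.sqrt σ := by
    rw [← Real.sqrt_sq_eq_abs]
    calc Real.sqrt (A ^ 2) ≤ Real.sqrt ((b - a) * E * σ) := Real.sqrt_le_sqrt hA2
      _ = Real.sqrt (b - a) * Real.sqrt E * Real.sqrt σ := by
          rw [Real.sqrt_mul (mul_nonneg hba.le hEnn), Real.sqrt_mul hba.le]
  have hgoal : f x - (1 / (b - a)) * (∫ t in a..b, f t) = A / (b - a) := by
    rw [hA]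
    field_simp
  rw [hgoal, abs_div, abs_of_pos hba, div_le_iff₀ hba]
  have hs0 : Real.sqrt (b - a) ≠ 0 := ne_of_gt (Real.sqrt_pos.2 hba)
  calc |A| ≤ Real.sqrt (b - a) * Real.sqrt E * Real.sqrt σ := habs
    _ = (Real.sqrt (b - a))⁻¹ * Real.sqrt E * Real.sqrt σ * (b - a) := by
        field_simp
        linear_combination (Real.sqrt E * Real.sqrt σ) * Real.sq_sqrt hba.le
end

section
/- Let a < b be real numbers, let a = x₀ < x₁ < ⋯ < xₙ = b be a partition of [a,b] with hᵢ = x_{i+1} − xᵢ, and let f : [a,b] → ℝ be differentiable on (a,b) with f' integrable on [a,b] and γ ≤ f'(x) ≤ Γ for all x ∈ [a,b]. Define S(f, Iₙ) = (1/2) ∑_{i=0}^{n−1} [f((3xᵢ + x_{i+1})/4) + f((xᵢ + 3x_{i+1})/4)] hᵢ and set Sᵢ = (f(x_{i+1}) − f(xᵢ))/hᵢ. Then |∫_a^b f(x) dx − S(f, Iₙ)| ≤ (1/4) ∑_{i=0}^{n−1} (Sᵢ − γ) hᵢ². -/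
lemma quad_piece_bound (g : ℝ → ℝ) (c d : ℝ) (hcd : c < d)
    (hm : MonotoneOn g (Set.Icc c d)) :
    |(∫ t in c..d, g t) - (1 / 2) * (g ((3 * c + d) / 4) + g ((c + 3 * d) / 4)) * (d - c)|
      ≤ (1 / 4) * (g d - g c) * (d - c) := by
  set q1 := (3 * c + d) / 4 with hq1
  set m := (c + d) / 2 with hmdef
  set q3 := (c + 3 * d) / 4 with hq3
  have hcq1 : c ≤ q1 := by rw [hq1]; linarith
  have hq1m : q1 ≤ m := by rw [hq1, hmdef]; linarith
  have hmq3 : m ≤ q3 := by rw [hmdef, hq3]; linarith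
  have hq3d : q3 ≤ d := by rw [hq3]; linarith
  have memIcc : ∀ {p : ℝ}, c ≤ p → p ≤ d → p ∈ Set.Icc c d := fun h1 h2 => ⟨h1, h2⟩
  -- integrability on each subinterval
  have hsub : ∀ p q : ℝ, c ≤ p → p ≤ q → q ≤ d → IntervalIntegrable g MeasureTheory.volume p q := by
    intro p q h1 h2 h3
    exact (hm.mono (by rw [Set.uIcc_of_le h2]; exact Set.Icc_subset_Icc h1 h3)).intervalIntegrable
  -- bounds on a subinterval
  have key : ∀ p q : ℝ, c ≤ p → p ≤ q → q ≤ d →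
      (q - p) * g p ≤ (∫ t in p..q, g t) ∧ (∫ t in p..q, g t) ≤ (q - p) * g q := by
    intro p q h1 h2 h3
    constructor
    · have := intervalIntegral.integral_mono_on h2
        (intervalIntegrable_const (c := g p)) (hsub p q h1 h2 h3)
        (fun t ht => hm (memIcc h1 (le_trans h2 h3)) (memIcc (le_trans h1 ht.1) (le_trans ht.2 h3)) ht.1)
      simpa [smul_eq_mul] using this
    · have := intervalIntegral.integral_mono_on h2 (hsub p q h1 h2 h3)
        (intervalIntegrable_const (c := g q))
        (fun t ht => hm (memIcc (le_trans h1 ht.1) (le_trans ht.2 h3)) (memIcc (le_trans h1 h2) h3) ht.2)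
      simpa [smul_eq_mul] using this
  have hsplit : (∫ t in c..q1, g t) + (∫ t in q1..m, g t) + (∫ t in m..q3, g t)
      + (∫ t in q3..d, g t) = ∫ t in c..d, g t := by
    rw [intervalIntegral.integral_add_adjacent_intervals (hsub c q1 le_rfl hcq1 (le_trans hq1m (le_trans hmq3 hq3d)))
        (hsub q1 m hcq1 hq1m (le_trans hmq3 hq3d)),
      intervalIntegral.integral_add_adjacent_intervals (hsub c m le_rfl (le_trans hcq1 hq1m) (le_trans hmq3 hq3d))
        (hsub m q3 (le_trans hcq1 hq1m) hmq3 hq3d),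
      intervalIntegral.integral_add_adjacent_intervals (hsub c q3 le_rfl (le_trans hcq1 (le_trans hq1m hmq3)) hq3d)
        (hsub q3 d (le_trans hcq1 (le_trans hq1m hmq3)) hq3d le_rfl)]
  obtain ⟨L1, U1⟩ := key c q1 le_rfl hcq1 (le_trans hq1m (le_trans hmq3 hq3d))
  obtain ⟨L2, U2⟩ := key q1 m hcq1 hq1m (le_trans hmq3 hq3d)
  obtain ⟨L3, U3⟩ := key m q3 (le_trans hcq1 hq1m) hmq3 hq3d
  obtain ⟨L4, U4⟩ := key q3 d (le_trans hcq1 (le_trans hq1m hmq3)) hq3d le_rfl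
  have g1 : g c ≤ g q1 := hm (memIcc le_rfl hcd.le) (memIcc hcq1 (by linarith)) hcq1
  have g2 : g q1 ≤ g m := hm (memIcc hcq1 (by linarith)) (memIcc (by linarith) (by linarith)) hq1m
  have g3 : g m ≤ g q3 := hm (memIcc (by linarith) (by linarith)) (memIcc (by linarith) hq3d) hmq3
  have g4 : g q3 ≤ g d := hm (memIcc (by linarith) hq3d) (memIcc hcd.le le_rfl) hq3d
  have hlen1 : q1 - c = (d - c) / 4 := by rw [hq1]; ring
  have hlen2 : m - q1 = (d - c) / 4 := by rw [hq1, hmdef]; ring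
  have hlen3 : q3 - m = (d - c) / 4 := by rw [hq3, hmdef]; ring
  have hlen4 : d - q3 = (d - c) / 4 := by rw [hq3]; ring
  rw [hlen1] at L1 U1; rw [hlen2] at L2 U2; rw [hlen3] at L3 U3; rw [hlen4] at L4 U4
  rw [abs_le]
  constructor <;> nlinarith [hcd.le, sub_pos.mpr hcd]

/-- **Composite quadrature rule, lower-bound estimate** (Theorem 3.1, inequality (3.2)).
For a partition `a = x 0 < x 1 < ⋯ < x n = b` with `hᵢ = x (i+1) - x i`, and `f` continuous
on `[a,b]`, differentiable on `(a,b)` with `f'` integrable and `γ ≤ f' ≤ Γ` on `[a,b]`,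
the composite rule `S(f, Iₙ) = (1/2) ∑ᵢ [f((3xᵢ+x_{i+1})/4) + f((xᵢ+3x_{i+1})/4)] hᵢ`
satisfies `|∫_a^b f - S(f, Iₙ)| ≤ (1/4) ∑ᵢ (Sᵢ - γ) hᵢ²` where
`Sᵢ = (f x_{i+1} - f xᵢ)/hᵢ`. -/
theorem composite_quadrature_L1_lower
    (a b γ Γ : ℝ) (hab : a < b) (n : ℕ) (hn : 1 ≤ n)
    (x : ℕ → ℝ) (hx0 : x 0 = a) (hxn : x n = b)
    (hmono : ∀ i < n, x i < x (i + 1))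
    (f f' : ℝ → ℝ)
    (hcont : ContinuousOn f (Set.Icc a b))
    (hderiv : ∀ t ∈ Set.Ioo a b, HasDerivAt f (f' t) t)
    (hint : IntervalIntegrable f' MeasureTheory.volume a b)
    (hbound : ∀ t ∈ Set.Icc a b, γ ≤ f' t ∧ f' t ≤ Γ) :
    |(∫ t in a..b, f t) -
        (1 / 2) * ∑ i ∈ Finset.range n,
          (f ((3 * x i + x (i + 1)) / 4) + f ((x i + 3 * x (i + 1)) / 4)) * (x (i + 1) - x i)|
      ≤ (1 / 4) * ∑ i ∈ Finset.range n,
          ((f (x (i + 1)) - f (x i)) / (x (i + 1) - x i) - γ) * (x (i + 1) - x i) ^ 2 := by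
  -- monotonicity of partition points
  have hxle : ∀ j, j ≤ n → ∀ i, i ≤ j → x i ≤ x j := by
    intro j
    induction j with
    | zero => intro _ i hi; rw [Nat.le_zero.mp hi]
    | succ k ih =>
      intro hk i hi
      rcases Nat.lt_or_ge i (k + 1) with h | h
      · exact le_trans (ih (by omega) i (by omega)) (hmono k (by omega)).le
      · have : i = k + 1 := by omega
        rw [this]
  have hmem : ∀ i, i ≤ n → x i ∈ Set.Icc a b := by
    intro i hi
    constructor
    · rw [← hx0]; exact hxle i hi 0 (Nat.zero_le _)
    · rw [← hxn]; exact hxle n le_rfl i hi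
  -- the monotone auxiliary function g
  set g : ℝ → ℝ := fun t => f t - γ * t with hgdef
  have hgmono : MonotoneOn g (Set.Icc a b) := by
    apply monotoneOn_of_deriv_nonneg (convex_Icc a b)
    · exact hcont.sub ((continuous_const.mul continuous_id).continuousOn)
    · rw [interior_Icc]
      intro t ht
      exact ((hderiv t ht).sub (by simpa using (hasDerivAt_id t).const_mul γ)).differentiableAt.differentiableWithinAt
    · rw [interior_Icc]
      intro t ht
      have hD : HasDerivAt g (f' t - γ) t :=
        (hderiv t ht).sub (by simpa using (hasDerivAt_id t).const_mul γ)
      rw [hD.deriv]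
      have := (hbound t (Set.mem_Icc_of_Ioo ht)).1
      linarith
  -- integrability of f on each subinterval
  have hfint : ∀ k, k < n → IntervalIntegrable f MeasureTheory.volume (x k) (x (k + 1)) := by
    intro k hk
    apply ContinuousOn.intervalIntegrable
    apply hcont.mono
    rw [Set.uIcc_of_le (hmono k hk).le]
    exact Set.Icc_subset_Icc (hmem k hk.le).1 (hmem (k + 1) hk).2
  -- split the integral
  have hsum : (∫ t in a..b, f t) = ∑ i ∈ Finset.range n, ∫ t in x i..x (i + 1), f t := by
    rw [intervalIntegral.sum_integral_adjacent_intervals hfint, hx0, hxn]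
  rw [hsum, Finset.mul_sum, Finset.mul_sum, ← Finset.sum_sub_distrib]
  refine le_trans (Finset.abs_sum_le_sum_abs _ _) (Finset.sum_le_sum ?_)
  intro i hi
  rw [Finset.mem_range] at hi
  set c := x i with hc
  set d := x (i + 1) with hd
  have hcd : c < d := hmono i hi
  have hca : a ≤ c := (hmem i hi.le).1
  have hdb : d ≤ b := (hmem (i + 1) hi).2
  -- per-interval: relate f error to g error
  have hgint : IntervalIntegrable g MeasureTheory.volume c d :=
    ((hgmono.mono (by rw [Set.uIcc_of_le hcd.le]; exact Set.Icc_subset_Icc hca hdb))).intervalIntegrable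
  have hlin : IntervalIntegrable (fun t => γ * t) MeasureTheory.volume c d :=
    (continuous_const.mul continuous_id).intervalIntegrable c d
  have hfg : (∫ t in c..d, f t) = (∫ t in c..d, g t) + γ * ((d ^ 2 - c ^ 2) / 2) := by
    have : (∫ t in c..d, f t) = ∫ t in c..d, (g t + γ * t) := by
      apply intervalIntegral.integral_congr
      intro t _; simp [hgdef]
    rw [this, intervalIntegral.integral_add hgint hlin,
      intervalIntegral.integral_const_mul, integral_id]
  have key := quad_piece_bound g c d hcd
    (hgmono.mono (Set.Icc_subset_Icc hca hdb))
  have heq : (∫ t in c..d, f t) - 1 / 2 * ((f ((3 * c + d) / 4) + f ((c + 3 * d) / 4)) * (d - c))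
      = (∫ t in c..d, g t) - 1 / 2 * (g ((3 * c + d) / 4) + g ((c + 3 * d) / 4)) * (d - c) := by
    rw [hfg]; simp only [hgdef]; ring
  have hrhs : 1 / 4 * (((f d - f c) / (d - c) - γ) * (d - c) ^ 2)
      = 1 / 4 * (g d - g c) * (d - c) := by
    have hne : d - c ≠ 0 := sub_ne_zero.mpr hcd.ne'
    simp only [hgdef]
    field_simp
    ring
  rw [heq, hrhs]
  exact key
end

section
/- Let a < b be real numbers, let a = x₀ < x₁ < ⋯ < xₙ = b be a partition of [a,b] with hᵢ = x_{i+1} − xᵢ, and let f : [a,b] → ℝ be differentiable on (a,b) with f' integrable on [a,b] and γ ≤ f'(x) ≤ Γ for all x ∈ [a,b]. Define S(f, Iₙ) = (1/2) ∑_{i=0}^{n−1} [f((3xᵢ + x_{i+1})/4) + f((xᵢ + 3x_{i+1})/4)] hᵢ and set Sᵢ = (f(x_{i+1}) − f(xᵢ))/hᵢ. Then |∫_a^b f(x) dx − S(f, Iₙ)| ≤ (1/4) ∑_{i=0}^{n−1} (Γ − Sᵢ) hᵢ². -/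
open MeasureTheory Set intervalIntegral

lemma cq_parts {a b : ℝ} {f f' : ℝ → ℝ} (hab : a ≤ b)
    (hcont : ContinuousOn f (Set.Icc a b))
    (hderiv : ∀ t ∈ Set.Ioo a b, HasDerivAt f (f' t) t)
    (hint : IntervalIntegrable f' volume a b)
    (c₀ p q : ℝ) (hap : a ≤ p) (hpq : p ≤ q) (hqb : q ≤ b) :
    ∫ t in p..q, (t - c₀) * f' t
      = (q - c₀) * f q - (p - c₀) * f p - ∫ t in p..q, f t := by
  have hsub : Set.Icc p q ⊆ Set.Icc a b := Set.Icc_subset_Icc hap hqb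
  have hfi : ∀ u v : ℝ, a ≤ u → u ≤ v → v ≤ b → IntervalIntegrable f volume u v := by
    intro u v hu huv hv
    exact (hcont.mono (by rw [Set.uIcc_of_le huv]; exact Set.Icc_subset_Icc hu hv)).intervalIntegrable
  have hfab : IntegrableOn f (Set.uIcc a b) volume := by
    rw [Set.uIcc_of_le hab]
    exact hcont.integrableOn_Icc
  set F : ℝ → ℝ := fun t => ∫ s in a..t, f s with hF
  have hFcont : ContinuousOn F (Set.Icc a b) := by
    have := intervalIntegral.continuousOn_primitive_interval (a := a) (b := b) (μ := volume) hfab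
    rwa [Set.uIcc_of_le hab] at this
  have key : ∫ t in p..q, (t - c₀) * f' t
      = ((q - c₀) * f q - F q) - ((p - c₀) * f p - F p) := by
    apply intervalIntegral.integral_eq_sub_of_hasDeriv_right_of_le hpq
    · exact (((continuousOn_id.sub continuousOn_const).mul (hcont.mono hsub)).sub
        (hFcont.mono hsub))
    · intro t ht
      have ht' : t ∈ Set.Ioo a b := ⟨lt_of_le_of_lt hap ht.1, lt_of_lt_of_le ht.2 hqb⟩
      have hf'c : ContinuousOn f (Set.Ioo a b) := hcont.mono Set.Ioo_subset_Icc_self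
      have hmeas := hf'c.stronglyMeasurableAtFilter (μ := volume) isOpen_Ioo t ht'
      have hca : ContinuousAt f t := hf'c.continuousAt (Ioo_mem_nhds ht'.1 ht'.2)
      have hFd : HasDerivAt F (f t) t :=
        intervalIntegral.integral_hasDerivAt_right (hfi a t le_rfl ht'.1.le ht'.2.le) hmeas hca
      have h1 : HasDerivAt (fun s => (s - c₀) * f s) (1 * f t + (t - c₀) * f' t) t :=
        ((hasDerivAt_id t).sub_const c₀).mul (hderiv t ht')
      have : HasDerivAt (fun s => (s - c₀) * f s - F s) ((t - c₀) * f' t) t := by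
        have := h1.sub hFd
        exact this.congr_deriv (by ring)
      exact this.hasDerivWithinAt
    · exact (hint.mono_set (by rw [Set.uIcc_of_le hpq, Set.uIcc_of_le hab]; exact hsub)).continuousOn_mul
        ((continuousOn_id.sub continuousOn_const))
  rw [key]
  have hFq : F q - F p = ∫ t in p..q, f t := by
    have := intervalIntegral.integral_interval_sub_left (hfi a q le_rfl (hap.trans hpq) hqb)
      (hfi a p le_rfl hap (hpq.trans hqb))
    exact this
  have : F q - F p = ∫ t in p..q, f t := hFq
  linarith [hFq]


lemma cq_piece {a b Γ : ℝ} {f' : ℝ → ℝ}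
    (hint : IntervalIntegrable f' volume a b)
    (hbound : ∀ t ∈ Set.Icc a b, f' t ≤ Γ)
    (c₀ p q M : ℝ) (hap : a ≤ p) (hpq : p ≤ q) (hqb : q ≤ b)
    (hM : ∀ t ∈ Set.Icc p q, |t - c₀| ≤ M) :
    |∫ t in p..q, (t - c₀) * (f' t - Γ)| ≤ M * ∫ t in p..q, (Γ - f' t) := by
  have hsub : Set.Icc p q ⊆ Set.Icc a b := Set.Icc_subset_Icc hap hqb
  have hf'pq : IntervalIntegrable f' volume p q :=
    hint.mono_set (by rw [Set.uIcc_of_le hpq, Set.uIcc_of_le (hap.trans (hpq.trans hqb))]; exact hsub)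
  have hg : IntervalIntegrable (fun t => (t - c₀) * (f' t - Γ)) volume p q :=
    (hf'pq.sub intervalIntegrable_const).continuousOn_mul (continuousOn_id.sub continuousOn_const)
  have h1 : |∫ t in p..q, (t - c₀) * (f' t - Γ)| ≤ ∫ t in p..q, |(t - c₀) * (f' t - Γ)| :=
    intervalIntegral.abs_integral_le_integral_abs hpq
  have h2 : ∫ t in p..q, |(t - c₀) * (f' t - Γ)| ≤ ∫ t in p..q, M * (Γ - f' t) := by
    apply intervalIntegral.integral_mono_on hpq hg.abs
      ((intervalIntegrable_const.sub hf'pq).const_mul M)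
    intro t ht
    have hb := hbound t (hsub ht)
    rw [abs_mul]
    have : |f' t - Γ| = Γ - f' t := by rw [abs_sub_comm, abs_of_nonneg (by linarith)]
    rw [this]
    exact mul_le_mul_of_nonneg_right (hM t ht) (by linarith)
  rw [intervalIntegral.integral_const_mul] at h2
  linarith

lemma cq_expand {a b Γ : ℝ} {f f' : ℝ → ℝ} (hab : a ≤ b)
    (hcont : ContinuousOn f (Set.Icc a b))
    (hderiv : ∀ t ∈ Set.Ioo a b, HasDerivAt f (f' t) t)
    (hint : IntervalIntegrable f' volume a b)
    (c₀ p q : ℝ) (hap : a ≤ p) (hpq : p ≤ q) (hqb : q ≤ b) :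
    ∫ t in p..q, (t - c₀) * (f' t - Γ)
      = (q - c₀) * f q - (p - c₀) * f p - (∫ t in p..q, f t)
        - Γ * ((q - c₀) ^ 2 - (p - c₀) ^ 2) / 2 := by
  have hsub : Set.Icc p q ⊆ Set.Icc a b := Set.Icc_subset_Icc hap hqb
  have hf'pq : IntervalIntegrable f' volume p q :=
    hint.mono_set (by rw [Set.uIcc_of_le hpq, Set.uIcc_of_le hab]; exact hsub)
  have h1 : IntervalIntegrable (fun t => (t - c₀) * f' t) volume p q :=
    hf'pq.continuousOn_mul (continuousOn_id.sub continuousOn_const)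
  have h2 : IntervalIntegrable (fun t => Γ * (t - c₀)) volume p q :=
    Continuous.intervalIntegrable (by continuity) p q
  have heq : (fun t => (t - c₀) * (f' t - Γ)) = fun t => (t - c₀) * f' t - Γ * (t - c₀) := by
    funext t; ring
  rw [heq, intervalIntegral.integral_sub h1 h2,
    cq_parts hab hcont hderiv hint c₀ p q hap hpq hqb]
  have h3 : ∫ t in p..q, Γ * (t - c₀) = Γ * ((q ^ 2 - p ^ 2) / 2 - c₀ * (q - p)) := by
    rw [intervalIntegral.integral_const_mul,
      intervalIntegral.integral_sub intervalIntegrable_id intervalIntegrable_const,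
      integral_id, intervalIntegral.integral_const, smul_eq_mul]
    ring
  rw [h3]; ring

lemma cq_local {a b Γ : ℝ} {f f' : ℝ → ℝ}
    (hcont : ContinuousOn f (Set.Icc a b))
    (hderiv : ∀ t ∈ Set.Ioo a b, HasDerivAt f (f' t) t)
    (hint : IntervalIntegrable f' volume a b)
    (hbound : ∀ t ∈ Set.Icc a b, f' t ≤ Γ)
    (c d : ℝ) (hac : a ≤ c) (hcd : c < d) (hdb : d ≤ b) :
    |(∫ t in c..d, f t) - (1 / 2) * (f ((3 * c + d) / 4) + f ((c + 3 * d) / 4)) * (d - c)|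
      ≤ (1 / 4) * (Γ - (f d - f c) / (d - c)) * (d - c) ^ 2 := by
  have hab : a ≤ b := hac.trans (hcd.le.trans hdb)
  have h1 : c ≤ (3 * c + d) / 4 := by linarith
  have h2 : (3 * c + d) / 4 ≤ (c + 3 * d) / 4 := by linarith
  have h3 : (c + 3 * d) / 4 ≤ d := by linarith
  have ha1 : a ≤ (3 * c + d) / 4 := hac.trans h1
  have hb1 : (3 * c + d) / 4 ≤ b := (h2.trans h3).trans hdb
  have ha2 : a ≤ (c + 3 * d) / 4 := ha1.trans h2
  have hb2 : (c + 3 * d) / 4 ≤ b := h3.trans hdb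
  -- the three expanded identities
  have e1 := cq_expand (Γ := Γ) hab hcont hderiv hint c c ((3 * c + d) / 4) hac h1 hb1
  have e2 := cq_expand (Γ := Γ) hab hcont hderiv hint ((c + d) / 2) ((3 * c + d) / 4)
    ((c + 3 * d) / 4) ha1 h2 hb2
  have e3 := cq_expand (Γ := Γ) hab hcont hderiv hint d ((c + 3 * d) / 4) d ha2 h3 hdb
  have hfi : ∀ u v : ℝ, a ≤ u → u ≤ v → v ≤ b → IntervalIntegrable f volume u v := by
    intro u v hu huv hv
    exact (hcont.mono (by rw [Set.uIcc_of_le huv]; exact Set.Icc_subset_Icc hu hv)).intervalIntegrable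
  have hs1 : (∫ t in c..(3 * c + d) / 4, f t) + (∫ t in ((3 * c + d) / 4)..((c + 3 * d) / 4), f t)
      = ∫ t in c..(c + 3 * d) / 4, f t :=
    intervalIntegral.integral_add_adjacent_intervals (hfi _ _ hac h1 hb1) (hfi _ _ ha1 h2 hb2)
  have hs2 : (∫ t in c..(c + 3 * d) / 4, f t) + (∫ t in ((c + 3 * d) / 4)..d, f t)
      = ∫ t in c..d, f t :=
    intervalIntegral.integral_add_adjacent_intervals (hfi _ _ hac (h1.trans h2) hb2)
      (hfi _ _ ha2 h3 hdb)
  -- key algebraic identity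
  have key : (1 / 2) * (f ((3 * c + d) / 4) + f ((c + 3 * d) / 4)) * (d - c) - (∫ t in c..d, f t)
      = (∫ t in c..(3 * c + d) / 4, (t - c) * (f' t - Γ))
        + (∫ t in ((3 * c + d) / 4)..((c + 3 * d) / 4), (t - (c + d) / 2) * (f' t - Γ))
        + (∫ t in ((c + 3 * d) / 4)..d, (t - d) * (f' t - Γ)) := by
    rw [e1, e2, e3, ← hs2, ← hs1]; ring
  -- bounds on each piece
  have hM : (0:ℝ) ≤ (d - c) / 4 := by linarith
  have b1 := cq_piece hint hbound c c ((3 * c + d) / 4) ((d - c) / 4) hac h1 hb1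
    (fun t ht => abs_le.mpr ⟨by linarith [ht.1], by linarith [ht.2]⟩)
  have b2 := cq_piece hint hbound ((c + d) / 2) ((3 * c + d) / 4) ((c + 3 * d) / 4) ((d - c) / 4)
    ha1 h2 hb2 (fun t ht => abs_le.mpr ⟨by linarith [ht.1], by linarith [ht.2]⟩)
  have b3 := cq_piece hint hbound d ((c + 3 * d) / 4) d ((d - c) / 4) ha2 h3 hdb
    (fun t ht => abs_le.mpr ⟨by linarith [ht.1], by linarith [ht.2]⟩)
  -- sum of the (Γ - f') integrals
  have hg : ∀ u v : ℝ, a ≤ u → u ≤ v → v ≤ b →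
      IntervalIntegrable (fun t => Γ - f' t) volume u v := by
    intro u v hu huv hv
    exact intervalIntegrable_const.sub (hint.mono_set
      (by rw [Set.uIcc_of_le huv, Set.uIcc_of_le hab]; exact Set.Icc_subset_Icc hu hv))
  have hgs1 : (∫ t in c..(3 * c + d) / 4, (Γ - f' t))
      + (∫ t in ((3 * c + d) / 4)..((c + 3 * d) / 4), (Γ - f' t))
      = ∫ t in c..(c + 3 * d) / 4, (Γ - f' t) :=
    intervalIntegral.integral_add_adjacent_intervals (hg _ _ hac h1 hb1) (hg _ _ ha1 h2 hb2)
  have hgs2 : (∫ t in c..(c + 3 * d) / 4, (Γ - f' t)) + (∫ t in ((c + 3 * d) / 4)..d, (Γ - f' t))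
      = ∫ t in c..d, (Γ - f' t) :=
    intervalIntegral.integral_add_adjacent_intervals (hg _ _ hac (h1.trans h2) hb2)
      (hg _ _ ha2 h3 hdb)
  -- FTC on [c,d]
  have hftc : ∫ t in c..d, f' t = f d - f c := by
    apply intervalIntegral.integral_eq_sub_of_hasDeriv_right_of_le hcd.le
      (hcont.mono (Set.Icc_subset_Icc hac hdb))
      (fun t ht => (hderiv t ⟨lt_of_le_of_lt hac ht.1, lt_of_lt_of_le ht.2 hdb⟩).hasDerivWithinAt)
      (hint.mono_set (by rw [Set.uIcc_of_le hcd.le, Set.uIcc_of_le hab]; exact Set.Icc_subset_Icc hac hdb))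
  have hgval : ∫ t in c..d, (Γ - f' t) = Γ * (d - c) - (f d - f c) := by
    rw [intervalIntegral.integral_sub intervalIntegrable_const
      (hint.mono_set (by rw [Set.uIcc_of_le hcd.le, Set.uIcc_of_le hab]; exact Set.Icc_subset_Icc hac hdb)), hftc, intervalIntegral.integral_const, smul_eq_mul]
    ring
  -- combine
  have habs : |(∫ t in c..d, f t)
      - (1 / 2) * (f ((3 * c + d) / 4) + f ((c + 3 * d) / 4)) * (d - c)|
      ≤ (d - c) / 4 * (Γ * (d - c) - (f d - f c)) := by
    rw [abs_sub_comm, key]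
    calc |_ + _ + _| ≤ _ := (abs_add_le _ _).trans (add_le_add (abs_add_le _ _) le_rfl)
    _ ≤ (d - c) / 4 * (∫ t in c..(3 * c + d) / 4, (Γ - f' t))
        + (d - c) / 4 * (∫ t in ((3 * c + d) / 4)..((c + 3 * d) / 4), (Γ - f' t))
        + (d - c) / 4 * (∫ t in ((c + 3 * d) / 4)..d, (Γ - f' t)) := by
      exact add_le_add (add_le_add b1 b2) b3
    _ = (d - c) / 4 * (Γ * (d - c) - (f d - f c)) := by
      rw [← mul_add, ← mul_add, hgs1, hgs2, hgval]
  have hne : d - c ≠ 0 := by linarith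
  have : (1 / 4) * (Γ - (f d - f c) / (d - c)) * (d - c) ^ 2
      = (d - c) / 4 * (Γ * (d - c) - (f d - f c)) := by
    field_simp
  linarith [habs, this.ge]

/-- **Composite quadrature rule, upper-bound estimate** (Theorem 3.1, inequality (3.3)).
For a partition `a = x 0 < x 1 < ⋯ < x n = b` with `hᵢ = x (i+1) - x i`, and `f` continuous
on `[a,b]`, differentiable on `(a,b)` with `f'` integrable and `γ ≤ f' ≤ Γ` on `[a,b]`,
the composite rule `S(f, Iₙ) = (1/2) ∑ᵢ [f((3xᵢ+x_{i+1})/4) + f((xᵢ+3x_{i+1})/4)] hᵢ`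
satisfies `|∫_a^b f - S(f, Iₙ)| ≤ (1/4) ∑ᵢ (Γ - Sᵢ) hᵢ²` where
`Sᵢ = (f x_{i+1} - f xᵢ)/hᵢ`. -/
theorem composite_quadrature_L1_upper
    (a b γ Γ : ℝ) (hab : a < b) (n : ℕ) (hn : 1 ≤ n)
    (x : ℕ → ℝ) (hx0 : x 0 = a) (hxn : x n = b)
    (hmono : ∀ i < n, x i < x (i + 1))
    (f f' : ℝ → ℝ)
    (hcont : ContinuousOn f (Set.Icc a b))
    (hderiv : ∀ t ∈ Set.Ioo a b, HasDerivAt f (f' t) t)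
    (hint : IntervalIntegrable f' MeasureTheory.volume a b)
    (hbound : ∀ t ∈ Set.Icc a b, γ ≤ f' t ∧ f' t ≤ Γ) :
    |(∫ t in a..b, f t) -
        (1 / 2) * ∑ i ∈ Finset.range n,
          (f ((3 * x i + x (i + 1)) / 4) + f ((x i + 3 * x (i + 1)) / 4)) * (x (i + 1) - x i)|
      ≤ (1 / 4) * ∑ i ∈ Finset.range n,
          (Γ - (f (x (i + 1)) - f (x i)) / (x (i + 1) - x i)) * (x (i + 1) - x i) ^ 2 := by
  have hbound' : ∀ t ∈ Set.Icc a b, f' t ≤ Γ := fun t ht => (hbound t ht).2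
  have hle : ∀ i j : ℕ, i ≤ j → j ≤ n → x i ≤ x j := by
    intro i j hij
    induction hij with
    | refl => intro _; exact le_rfl
    | @step m h ih => intro hmn; exact (ih (by omega)).trans (hmono m (by omega)).le
  have hxa : ∀ i ≤ n, a ≤ x i := fun i hi => hx0 ▸ hle 0 i (Nat.zero_le i) hi
  have hxb : ∀ i ≤ n, x i ≤ b := fun i hi => hxn ▸ hle i n hi le_rfl
  have hfi : ∀ k < n, IntervalIntegrable f MeasureTheory.volume (x k) (x (k + 1)) := by
    intro k hk
    apply ContinuousOn.intervalIntegrable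
    apply hcont.mono
    rw [Set.uIcc_of_le (hmono k hk).le]
    exact Set.Icc_subset_Icc (hxa k hk.le) (hxb (k + 1) hk)
  have hsplit : (∫ t in a..b, f t)
      = ∑ i ∈ Finset.range n, ∫ t in (x i)..(x (i + 1)), f t := by
    rw [intervalIntegral.sum_integral_adjacent_intervals hfi, hx0, hxn]
  rw [hsplit, Finset.mul_sum, ← Finset.sum_sub_distrib]
  calc |∑ i ∈ Finset.range n, ((∫ t in (x i)..(x (i + 1)), f t)
        - (1 / 2) * ((f ((3 * x i + x (i + 1)) / 4) + f ((x i + 3 * x (i + 1)) / 4))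
          * (x (i + 1) - x i)))|
      ≤ ∑ i ∈ Finset.range n, |(∫ t in (x i)..(x (i + 1)), f t)
        - (1 / 2) * ((f ((3 * x i + x (i + 1)) / 4) + f ((x i + 3 * x (i + 1)) / 4))
          * (x (i + 1) - x i))| := Finset.abs_sum_le_sum_abs _ _
    _ ≤ ∑ i ∈ Finset.range n,
          (1 / 4) * (Γ - (f (x (i + 1)) - f (x i)) / (x (i + 1) - x i)) * (x (i + 1) - x i) ^ 2 := by
        apply Finset.sum_le_sum
        intro i hi
        have hi' := Finset.mem_range.mp hi
        have := cq_local hcont hderiv hint hbound' (x i) (x (i + 1))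
          (hxa i hi'.le) (hmono i hi') (hxb (i + 1) hi')
        calc |(∫ t in (x i)..(x (i + 1)), f t)
            - (1 / 2) * ((f ((3 * x i + x (i + 1)) / 4) + f ((x i + 3 * x (i + 1)) / 4))
              * (x (i + 1) - x i))|
            = |(∫ t in (x i)..(x (i + 1)), f t)
            - (1 / 2) * (f ((3 * x i + x (i + 1)) / 4) + f ((x i + 3 * x (i + 1)) / 4))
              * (x (i + 1) - x i)| := by ring_nf
          _ ≤ _ := this
    _ = (1 / 4) * ∑ i ∈ Finset.range n,
          (Γ - (f (x (i + 1)) - f (x i)) / (x (i + 1) - x i)) * (x (i + 1) - x i) ^ 2 := by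
        rw [Finset.mul_sum]
        exact Finset.sum_congr rfl fun i _ => by ring
end

section
/- Let a < b be real numbers, let n ≥ 1 be an integer, and consider the uniform partition xᵢ = a + i(b−a)/n (i = 0, 1, …, n) of [a,b] with mesh h = (b−a)/n. Let f : [a,b] → ℝ be twice continuously differentiable on (a,b) with f'' ∈ L²[a,b]. Define S(f, Iₙ) = (h/2) ∑_{i=0}^{n−1} [f((3xᵢ + x_{i+1})/4) + f((xᵢ + 3x_{i+1})/4)]. Then |∫_a^b f(x) dx − S(f, Iₙ)| ≤ ((b−a)^{5/2}/(4√3 π n²)) · ‖f''‖₂. -/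
open MeasureTheory Set intervalIntegral

private lemma quad_cs (x y : ℝ) (hxy : x ≤ y) (P F : ℝ → ℝ) (hP : Continuous P)
    (h1 : IntervalIntegrable F volume x y)
    (h2 : IntervalIntegrable (fun t => F t ^ 2) volume x y) :
    |∫ t in x..y, P t * F t| ≤
      Real.sqrt (∫ t in x..y, P t ^ 2) * Real.sqrt (∫ t in x..y, F t ^ 2) := by
  set A := ∫ t in x..y, P t ^ 2 with hAdef
  set B := ∫ t in x..y, F t ^ 2 with hBdef
  have hA0 : 0 ≤ A := intervalIntegral.integral_nonneg hxy (fun t _ => sq_nonneg _)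
  have hB0 : 0 ≤ B := intervalIntegral.integral_nonneg hxy (fun t _ => sq_nonneg _)
  have hPf : IntervalIntegrable (fun t => P t * F t) volume x y :=
    h1.continuousOn_mul hP.continuousOn
  have key : ∀ s : ℝ, 0 < s → |∫ t in x..y, P t * F t| ≤ (s ^ 2 * A + B) / (2 * s) := by
    intro s hs
    have hi1 : IntervalIntegrable (fun t => s ^ 2 * P t ^ 2) volume x y :=
      (continuous_const.mul (hP.pow 2)).intervalIntegrable x y
    have hi2 : IntervalIntegrable (fun t => (s ^ 2 * P t ^ 2 + F t ^ 2) / (2 * s)) volume x y :=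
      (hi1.add h2).div_const (2 * s)
    calc |∫ t in x..y, P t * F t| ≤ ∫ t in x..y, |P t * F t| :=
          intervalIntegral.abs_integral_le_integral_abs hxy
      _ ≤ ∫ t in x..y, (s ^ 2 * P t ^ 2 + F t ^ 2) / (2 * s) := by
          apply intervalIntegral.integral_mono_on hxy hPf.abs hi2
          intro t _
          rw [le_div_iff₀ (by positivity)]
          rcases abs_cases (P t * F t) with ⟨h, _⟩ | ⟨h, _⟩ <;> rw [h] <;>
            nlinarith [sq_nonneg (s * P t - F t), sq_nonneg (s * P t + F t)]
      _ = (s ^ 2 * A + B) / (2 * s) := by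
          rw [intervalIntegral.integral_div, intervalIntegral.integral_add hi1 h2,
            intervalIntegral.integral_const_mul]
  refine le_of_forall_pos_le_add fun ε hε => ?_
  by_cases hA' : A = 0
  · have h := key (B / (2 * ε) + 1) (by positivity)
    have hb : (B / (2 * ε) + 1) > 0 := by positivity
    have : (((B / (2 * ε) + 1)) ^ 2 * A + B) / (2 * (B / (2 * ε) + 1)) ≤ ε := by
      rw [hA', mul_zero, zero_add, div_le_iff₀ (by positivity)]
      have : ε * (2 * (B / (2 * ε) + 1)) = B + 2 * ε := by field_simp
      rw [this]; linarith
    have hs : 0 ≤ Real.sqrt A * Real.sqrt B := by positivity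
    linarith [h.trans this]
  · have hApos : 0 < A := lt_of_le_of_ne hA0 (Ne.symm hA')
    set sa := Real.sqrt A with hsa
    set sb := Real.sqrt B with hsb
    have hsa0 : 0 < sa := Real.sqrt_pos.2 hApos
    have hsb0 : 0 ≤ sb := Real.sqrt_nonneg B
    have hsaA : sa ^ 2 = A := Real.sq_sqrt hA0
    have hsbB : sb ^ 2 = B := Real.sq_sqrt hB0
    set ε₁ := ε / (sa + 1) with hε₁def
    have hε₁ : 0 < ε₁ := by positivity
    set s := (sb + ε₁) / sa with hsdef
    have hs : 0 < s := by positivity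
    have hssa : s * sa = sb + ε₁ := by
      rw [hsdef]; field_simp
    have hkey := key s hs
    have e1 : (s ^ 2 * A + B) / (2 * s) ≤ sa * (sb + ε₁) := by
      rw [div_le_iff₀ (by positivity)]
      have h2 : s ^ 2 * A = (sb + ε₁) ^ 2 := by
        rw [← hsaA, ← hssa]; ring
      rw [h2]
      have : sa * (sb + ε₁) * (2 * s) = 2 * ((s * sa) * (sb + ε₁)) := by ring
      rw [this, hssa]
      nlinarith [sq_nonneg ε₁]
    have e2 : sa * ε₁ ≤ ε := by
      rw [hε₁def, mul_div_assoc']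
      rw [div_le_iff₀ (by positivity)]
      nlinarith
    have expand : sa * (sb + ε₁) = sa * sb + sa * ε₁ := by ring
    linarith [hkey.trans e1]

private lemma quad_ibp (u v x y c : ℝ) (hux : u ≤ x) (hxy : x ≤ y) (hyv : y ≤ v)
    (f g f'' : ℝ → ℝ)
    (hf : ContinuousOn f (Icc u v)) (hg : ContinuousOn g (Icc u v))
    (hfg : ∀ t ∈ Ioo u v, HasDerivAt f (g t) t)
    (hgf : ∀ t ∈ Ioo u v, HasDerivAt g (f'' t) t)
    (hint : IntervalIntegrable f'' volume u v) :
    ∫ t in x..y, (t - c) ^ 2 / 2 * f'' t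
      = (y - c) ^ 2 / 2 * g y - (x - c) ^ 2 / 2 * g x
        - ((y - c) * f y - (x - c) * f x) + ∫ t in x..y, f t := by
  have huv : u ≤ v := hux.trans (hxy.trans hyv)
  have hsub : Icc x y ⊆ Icc u v := Icc_subset_Icc hux hyv
  have hsubI : Ioo x y ⊆ Ioo u v := Ioo_subset_Ioo hux hyv
  have huIcc : uIcc x y ⊆ uIcc u v := by
    rw [uIcc_of_le hxy, uIcc_of_le huv]; exact hsub
  have hfxy : ContinuousOn f (Icc x y) := hf.mono hsub
  have hgxy : ContinuousOn g (Icc x y) := hg.mono hsub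
  have hfint : IntervalIntegrable f volume x y := by
    rw [intervalIntegrable_iff_integrableOn_Icc_of_le hxy]
    exact hfxy.integrableOn_Icc
  have hf''xy : IntervalIntegrable f'' volume x y := hint.mono_set huIcc
  have hPf'' : IntervalIntegrable (fun t => (t - c) ^ 2 / 2 * f'' t) volume x y := by
    apply hf''xy.continuousOn_mul
    fun_prop
  have hP'g : IntervalIntegrable (fun t => (t - c) * g t) volume x y := by
    rw [intervalIntegrable_iff_integrableOn_Icc_of_le hxy]
    exact (((continuous_id.sub continuous_const).continuousOn).mul hgxy).integrableOn_Icc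
  -- first FTC: ∫ ((t-c)•g + (t-c)²/2•f'') = boundary of (t-c)²/2 * g
  have ftc1 : ∫ t in x..y, ((t - c) * g t + (t - c) ^ 2 / 2 * f'' t)
      = (y - c) ^ 2 / 2 * g y - (x - c) ^ 2 / 2 * g x := by
    apply intervalIntegral.integral_eq_sub_of_hasDeriv_right_of_le hxy
    · exact (((continuous_id.sub continuous_const).pow 2).div_const 2).continuousOn.mul hgxy
    · intro t ht
      have hD : HasDerivAt (fun t => (t - c) ^ 2 / 2 * g t)
          ((t - c) * g t + (t - c) ^ 2 / 2 * f'' t) t := by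
        have h1 : HasDerivAt (fun t : ℝ => (t - c) ^ 2 / 2) (t - c) t := by
          have := (((hasDerivAt_id t).sub_const c).pow 2).div_const 2
          simpa using this.congr_deriv (by simp only [id_eq]; ring)
        exact h1.mul (hgf t (hsubI ht))
      exact hD.hasDerivWithinAt
    · exact hP'g.add hPf''
  have ftc2 : ∫ t in x..y, (f t + (t - c) * g t)
      = (y - c) * f y - (x - c) * f x := by
    apply intervalIntegral.integral_eq_sub_of_hasDeriv_right_of_le hxy
    · exact ((continuous_id.sub continuous_const).continuousOn).mul hfxy
    · intro t ht
      have hD : HasDerivAt (fun t => (t - c) * f t) (f t + (t - c) * g t) t := by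
        have h1 : HasDerivAt (fun t : ℝ => t - c) 1 t := (hasDerivAt_id t).sub_const c
        have := h1.mul (hfg t (hsubI ht))
        exact this.congr_deriv (by ring)
      exact hD.hasDerivWithinAt
    · exact hfint.add hP'g
  rw [intervalIntegral.integral_add hP'g hPf''] at ftc1
  rw [intervalIntegral.integral_add hfint hP'g] at ftc2
  linarith

private lemma quad_three_cs (a1 a2 a3 b1 b2 b3 : ℝ)
    (ha1 : 0 ≤ a1) (ha2 : 0 ≤ a2) (ha3 : 0 ≤ a3)
    (hb1 : 0 ≤ b1) (hb2 : 0 ≤ b2) (hb3 : 0 ≤ b3) :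
    Real.sqrt a1 * Real.sqrt b1 + Real.sqrt a2 * Real.sqrt b2 + Real.sqrt a3 * Real.sqrt b3
      ≤ Real.sqrt (a1 + a2 + a3) * Real.sqrt (b1 + b2 + b3) := by
  have h := Real.sum_sqrt_mul_sqrt_le (Finset.univ : Finset (Fin 3))
    (f := ![a1, a2, a3]) (g := ![b1, b2, b3])
    (by intro i; fin_cases i <;> assumption)
    (by intro i; fin_cases i <;> assumption)
  simpa [Fin.sum_univ_three] using h

private lemma quad_interval (u v : ℝ) (huv : u < v) (f g f'' : ℝ → ℝ)
    (hf : ContinuousOn f (Icc u v)) (hg : ContinuousOn g (Icc u v))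
    (hfg : ∀ t ∈ Ioo u v, HasDerivAt f (g t) t)
    (hgf : ∀ t ∈ Ioo u v, HasDerivAt g (f'' t) t)
    (hint : IntervalIntegrable f'' volume u v)
    (hint2 : IntervalIntegrable (fun t => f'' t ^ 2) volume u v) :
    |(∫ t in u..v, f t) - (v - u) / 2 * (f ((3 * u + v) / 4) + f ((u + 3 * v) / 4))|
      ≤ Real.sqrt ((v - u) ^ 5 / 5120) * Real.sqrt (∫ t in u..v, f'' t ^ 2) := by
  have hup : u ≤ (3 * u + v) / 4 := by linarith
  have hpq : (3 * u + v) / 4 ≤ (u + 3 * v) / 4 := by linarith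
  have hqv : (u + 3 * v) / 4 ≤ v := by linarith
  have huq : u ≤ (u + 3 * v) / 4 := hup.trans hpq
  have hpv : (3 * u + v) / 4 ≤ v := hpq.trans hqv
  have huv' : u ≤ v := huv.le
  have msub : ∀ {x y : ℝ}, u ≤ x → x ≤ y → y ≤ v → uIcc x y ⊆ uIcc u v := by
    intro x y h1 h2 h3
    rw [uIcc_of_le h2, uIcc_of_le huv']
    exact Icc_subset_Icc h1 h3
  have ibp1 := quad_ibp u v u ((3 * u + v) / 4) u le_rfl hup hpv f g f'' hf hg hfg hgf hint
  have ibp2 := quad_ibp u v ((3 * u + v) / 4) ((u + 3 * v) / 4) ((u + v) / 2)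
    hup hpq hqv f g f'' hf hg hfg hgf hint
  have ibp3 := quad_ibp u v ((u + 3 * v) / 4) v v huq hqv le_rfl f g f'' hf hg hfg hgf hint
  have hfi : ∀ {x y : ℝ}, u ≤ x → x ≤ y → y ≤ v → IntervalIntegrable f volume x y := by
    intro x y h1 h2 h3
    rw [intervalIntegrable_iff_integrableOn_Icc_of_le h2]
    exact (hf.mono (Icc_subset_Icc h1 h3)).integrableOn_Icc
  have hsplit : ((∫ t in u..((3 * u + v) / 4), f t) + ∫ t in ((3 * u + v) / 4)..((u + 3 * v) / 4), f t)
      + (∫ t in ((u + 3 * v) / 4)..v, f t) = ∫ t in u..v, f t := by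
    rw [intervalIntegral.integral_add_adjacent_intervals (hfi le_rfl hup hpv)
      (hfi hup hpq hqv), intervalIntegral.integral_add_adjacent_intervals
      (hfi le_rfl huq hqv) (hfi huq hqv le_rfl)]
  have hEq : (∫ t in u..v, f t) - (v - u) / 2 * (f ((3 * u + v) / 4) + f ((u + 3 * v) / 4))
      = (∫ t in u..((3 * u + v) / 4), (t - u) ^ 2 / 2 * f'' t)
        + (∫ t in ((3 * u + v) / 4)..((u + 3 * v) / 4), (t - (u + v) / 2) ^ 2 / 2 * f'' t)
        + (∫ t in ((u + 3 * v) / 4)..v, (t - v) ^ 2 / 2 * f'' t) := by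
    linear_combination (-1 : ℝ) * ibp1 - ibp2 - ibp3 - hsplit
  rw [hEq]
  -- abbreviations
  set e1 := ∫ t in u..((3 * u + v) / 4), (t - u) ^ 2 / 2 * f'' t with he1
  set e2 := ∫ t in ((3 * u + v) / 4)..((u + 3 * v) / 4), (t - (u + v) / 2) ^ 2 / 2 * f'' t with he2
  set e3 := ∫ t in ((u + 3 * v) / 4)..v, (t - v) ^ 2 / 2 * f'' t with he3
  have cs1 := quad_cs u ((3 * u + v) / 4) hup (fun t => (t - u) ^ 2 / 2) f''
    (by fun_prop) (hint.mono_set (msub le_rfl hup hpv)) (hint2.mono_set (msub le_rfl hup hpv))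
  have cs2 := quad_cs ((3 * u + v) / 4) ((u + 3 * v) / 4) hpq (fun t => (t - (u + v) / 2) ^ 2 / 2)
    f'' (by fun_prop) (hint.mono_set (msub hup hpq hqv)) (hint2.mono_set (msub hup hpq hqv))
  have cs3 := quad_cs ((u + 3 * v) / 4) v hqv (fun t => (t - v) ^ 2 / 2) f''
    (by fun_prop) (hint.mono_set (msub huq hqv le_rfl)) (hint2.mono_set (msub huq hqv le_rfl))
  -- values of the kernel integrals
  have hval : ∀ c x y : ℝ, (∫ t in x..y, ((t - c) ^ 2 / 2) ^ 2)
      = ((y - c) ^ 5 - (x - c) ^ 5) / 20 := by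
    intro c x y
    have : (∫ t in x..y, ((t - c) ^ 2 / 2) ^ 2) = ∫ t in x..y, (1 / 4 : ℝ) * (t - c) ^ 4 := by
      apply intervalIntegral.integral_congr
      intro t _
      ring
    rw [this, intervalIntegral.integral_const_mul,
      intervalIntegral.integral_comp_sub_right (fun s => s ^ 4) c, integral_pow]
    norm_num
    ring
  have hA1nn : 0 ≤ ∫ t in u..((3 * u + v) / 4), ((t - u) ^ 2 / 2) ^ 2 :=
    intervalIntegral.integral_nonneg hup (fun t _ => sq_nonneg _)
  have hA2nn : 0 ≤ ∫ t in ((3 * u + v) / 4)..((u + 3 * v) / 4),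
      ((t - (u + v) / 2) ^ 2 / 2) ^ 2 :=
    intervalIntegral.integral_nonneg hpq (fun t _ => sq_nonneg _)
  have hA3nn : 0 ≤ ∫ t in ((u + 3 * v) / 4)..v, ((t - v) ^ 2 / 2) ^ 2 :=
    intervalIntegral.integral_nonneg hqv (fun t _ => sq_nonneg _)
  have hB1nn : 0 ≤ ∫ t in u..((3 * u + v) / 4), f'' t ^ 2 :=
    intervalIntegral.integral_nonneg hup (fun t _ => sq_nonneg _)
  have hB2nn : 0 ≤ ∫ t in ((3 * u + v) / 4)..((u + 3 * v) / 4), f'' t ^ 2 :=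
    intervalIntegral.integral_nonneg hpq (fun t _ => sq_nonneg _)
  have hB3nn : 0 ≤ ∫ t in ((u + 3 * v) / 4)..v, f'' t ^ 2 :=
    intervalIntegral.integral_nonneg hqv (fun t _ => sq_nonneg _)
  have step1 : |e1 + e2 + e3| ≤
      Real.sqrt (∫ t in u..((3 * u + v) / 4), ((t - u) ^ 2 / 2) ^ 2) *
        Real.sqrt (∫ t in u..((3 * u + v) / 4), f'' t ^ 2)
      + Real.sqrt (∫ t in ((3 * u + v) / 4)..((u + 3 * v) / 4),
          ((t - (u + v) / 2) ^ 2 / 2) ^ 2) *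
        Real.sqrt (∫ t in ((3 * u + v) / 4)..((u + 3 * v) / 4), f'' t ^ 2)
      + Real.sqrt (∫ t in ((u + 3 * v) / 4)..v, ((t - v) ^ 2 / 2) ^ 2) *
        Real.sqrt (∫ t in ((u + 3 * v) / 4)..v, f'' t ^ 2) :=
    (abs_add_three e1 e2 e3).trans (add_le_add (add_le_add cs1 cs2) cs3)
  have step2 := quad_three_cs _ _ _ _ _ _ hA1nn hA2nn hA3nn hB1nn hB2nn hB3nn
  have hAsum : (∫ t in u..((3 * u + v) / 4), ((t - u) ^ 2 / 2) ^ 2)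
      + (∫ t in ((3 * u + v) / 4)..((u + 3 * v) / 4), ((t - (u + v) / 2) ^ 2 / 2) ^ 2)
      + (∫ t in ((u + 3 * v) / 4)..v, ((t - v) ^ 2 / 2) ^ 2) = (v - u) ^ 5 / 5120 := by
    rw [hval, hval, hval]; ring
  have hBsum : (∫ t in u..((3 * u + v) / 4), f'' t ^ 2)
      + (∫ t in ((3 * u + v) / 4)..((u + 3 * v) / 4), f'' t ^ 2)
      + (∫ t in ((u + 3 * v) / 4)..v, f'' t ^ 2) = ∫ t in u..v, f'' t ^ 2 := by
    rw [intervalIntegral.integral_add_adjacent_intervals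
      (hint2.mono_set (msub le_rfl hup hpv)) (hint2.mono_set (msub hup hpq hqv)),
      intervalIntegral.integral_add_adjacent_intervals
      (hint2.mono_set (msub le_rfl huq hqv)) (hint2.mono_set (msub huq hqv le_rfl))]
  exact step1.trans (step2.trans_eq (by rw [hAsum, hBsum]))

set_option maxHeartbeats 1000000 in
/-- **Composite quadrature rule for `f'' ∈ L²[a,b]`, uniform partition** (Theorem 3.2,
inequality (3.4)). With nodes `x i = a + i (b-a)/n` and mesh `h = (b-a)/n`, for `f`
continuous on `[a,b]`, twice continuously differentiable on `(a,b)` with `f''`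
square-integrable on `[a,b]`, the composite rule
`S(f, Iₙ) = (h/2) ∑ᵢ [f((3xᵢ+x_{i+1})/4) + f((xᵢ+3x_{i+1})/4)]` satisfies
`|∫_a^b f - S(f, Iₙ)| ≤ ((b-a)^{5/2}/(4√3 π n²)) ‖f''‖₂`. -/
theorem composite_quadrature_second_deriv_L2
    (a b : ℝ) (hab : a < b) (n : ℕ) (hn : 1 ≤ n)
    (x : ℕ → ℝ) (hx : ∀ i, x i = a + i * (b - a) / n)
    (f f' f'' : ℝ → ℝ)
    (hcont : ContinuousOn f (Set.Icc a b))
    (hderiv : ∀ t ∈ Set.Ioo a b, HasDerivAt f (f' t) t)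
    (hderiv2 : ∀ t ∈ Set.Ioo a b, HasDerivAt f' (f'' t) t)
    (hcont2 : ContinuousOn f'' (Set.Ioo a b))
    (hL2 : IntervalIntegrable (fun t => (f'' t) ^ 2) MeasureTheory.volume a b) :
    |(∫ t in a..b, f t) -
        ((b - a) / n / 2) * ∑ i ∈ Finset.range n,
          (f ((3 * x i + x (i + 1)) / 4) + f ((x i + 3 * x (i + 1)) / 4))|
      ≤ (b - a) ^ ((5 : ℝ) / 2) / (4 * Real.sqrt 3 * Real.pi * n ^ 2) *
          Real.sqrt (∫ t in a..b, (f'' t) ^ 2) := by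
  have hab' : a ≤ b := hab.le
  have hn0 : (0 : ℝ) < n := by exact_mod_cast Nat.pos_of_ne_zero (by omega)
  have hn1 : (1 : ℝ) ≤ n := by exact_mod_cast hn
  have hnne : (n : ℝ) ≠ 0 := ne_of_gt hn0
  -- f'' is interval integrable
  have hint : IntervalIntegrable f'' MeasureTheory.volume a b := by
    have hL2' : MeasureTheory.IntegrableOn (fun t => f'' t ^ 2) (Set.Ioc a b)
        MeasureTheory.volume := (intervalIntegrable_iff_integrableOn_Ioc_of_le hab').1 hL2
    have hmeas : MeasureTheory.AEStronglyMeasurable f''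
        (MeasureTheory.volume.restrict (Set.Ioc a b)) := by
      have h1 : MeasureTheory.AEStronglyMeasurable f''
          (MeasureTheory.volume.restrict (Set.Ioo a b)) :=
        hcont2.aestronglyMeasurable measurableSet_Ioo
      rwa [MeasureTheory.Measure.restrict_congr_set MeasureTheory.Ioo_ae_eq_Ioc] at h1
    rw [intervalIntegrable_iff_integrableOn_Ioc_of_le hab']
    have hconst : MeasureTheory.IntegrableOn (fun _ : ℝ => (1 : ℝ)) (Set.Ioc a b)
        MeasureTheory.volume :=
      MeasureTheory.integrableOn_const measure_Ioc_lt_top.ne (by simp)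
    have hsum : MeasureTheory.IntegrableOn (fun t => (f'' t ^ 2 + 1) / 2) (Set.Ioc a b)
        MeasureTheory.volume := (hL2'.add hconst).div_const 2
    refine MeasureTheory.Integrable.mono' hsum hmeas ?_
    filter_upwards with t
    rw [Real.norm_eq_abs]
    nlinarith [sq_nonneg (|f'' t| - 1), sq_abs (f'' t)]
  -- the continuous extension of f'
  set m₀ : ℝ := (a + b) / 2 with hm₀def
  have hm₀ : m₀ ∈ Set.Ioo a b := by constructor <;> (rw [hm₀def]; linarith)
  set g : ℝ → ℝ := fun t => f' m₀ + ∫ s in m₀..t, f'' s with hgdef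
  have hgcont : ContinuousOn g (Set.Icc a b) := by
    have h1 : ContinuousOn (fun t => ∫ s in m₀..t, f'' s) (Set.uIcc a b) :=
      intervalIntegral.continuousOn_primitive_interval' hint
        (by rw [Set.uIcc_of_le hab']; exact ⟨hm₀.1.le, hm₀.2.le⟩)
    rw [Set.uIcc_of_le hab'] at h1
    exact continuousOn_const.add h1
  have hgeq : ∀ t ∈ Set.Ioo a b, g t = f' t := by
    intro t ht
    have hsub : Set.uIcc m₀ t ⊆ Set.Ioo a b := Set.OrdConnected.uIcc_subset
      Set.ordConnected_Ioo hm₀ ht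
    have hftc : ∫ s in m₀..t, f'' s = f' t - f' m₀ := by
      apply intervalIntegral.integral_eq_sub_of_hasDeriv_right
      · intro s hs
        exact ((hderiv2 s (hsub hs)).continuousAt).continuousWithinAt
      · intro s hs
        refine (hderiv2 s ?_).hasDerivWithinAt
        refine hsub ?_
        rw [Set.uIcc]
        exact Set.Ioo_subset_Icc_self hs
      · refine hint.mono_set ?_
        rw [Set.uIcc_of_le hab']
        exact hsub.trans Set.Ioo_subset_Icc_self
    rw [hgdef]
    simp only
    rw [hftc]
    ring
  have hfg : ∀ t ∈ Set.Ioo a b, HasDerivAt f (g t) t := by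
    intro t ht
    rw [hgeq t ht]
    exact hderiv t ht
  have hgf : ∀ t ∈ Set.Ioo a b, HasDerivAt g (f'' t) t := by
    intro t ht
    have hev : g =ᶠ[nhds t] f' := by
      filter_upwards [Ioo_mem_nhds ht.1 ht.2] with s hs using hgeq s hs
    exact (hderiv2 t ht).congr_of_eventuallyEq hev
  -- partition facts
  have hx0 : x 0 = a := by rw [hx]; simp
  have hxn : x n = b := by rw [hx]; field_simp; ring
  have hstep : ∀ i : ℕ, x (i + 1) - x i = (b - a) / n := by
    intro i
    rw [hx, hx]
    push_cast
    ring
  have hlt : ∀ i : ℕ, x i < x (i + 1) := by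
    intro i
    have h1 := hstep i
    have h2 : 0 < (b - a) / n := div_pos (by linarith) hn0
    linarith
  have hmem : ∀ i : ℕ, i ≤ n → x i ∈ Set.Icc a b := by
    intro i hi
    rw [hx]
    have hba : (0 : ℝ) ≤ b - a := by linarith
    have hi' : (i : ℝ) ≤ n := by exact_mod_cast hi
    constructor
    · have h0 : 0 ≤ (i : ℝ) * (b - a) / n :=
        div_nonneg (mul_nonneg (Nat.cast_nonneg i) hba) hn0.le
      linarith
    · have h1 : (i : ℝ) * (b - a) / n ≤ (n : ℝ) * (b - a) / n := by gcongr
      have heq : (n : ℝ) * (b - a) / n = b - a := by field_simp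
      linarith
  -- splitting the integral
  have hfi : ∀ i : ℕ, i < n → IntervalIntegrable f MeasureTheory.volume (x i) (x (i + 1)) := by
    intro i hi
    apply ContinuousOn.intervalIntegrable
    apply hcont.mono
    rw [Set.uIcc_of_le (hlt i).le]
    exact Set.Icc_subset_Icc (hmem i (by omega)).1 (hmem (i + 1) (by omega)).2
  have husub : ∀ i : ℕ, i < n → Set.uIcc (x i) (x (i + 1)) ⊆ Set.uIcc a b := by
    intro i hi
    rw [Set.uIcc_of_le (hlt i).le, Set.uIcc_of_le hab']
    exact Set.Icc_subset_Icc (hmem i (by omega)).1 (hmem (i + 1) (by omega)).2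
  have hsplitf : ∫ t in a..b, f t = ∑ i ∈ Finset.range n, ∫ t in (x i)..(x (i + 1)), f t := by
    rw [← hx0, ← hxn]
    exact (intervalIntegral.sum_integral_adjacent_intervals hfi).symm
  have hBtot : ∑ i ∈ Finset.range n, (∫ t in (x i)..(x (i + 1)), f'' t ^ 2)
      = ∫ t in a..b, f'' t ^ 2 := by
    rw [← hx0, ← hxn]
    exact intervalIntegral.sum_integral_adjacent_intervals
      (fun i hi => hL2.mono_set (husub i hi))
  have main1 : (∫ t in a..b, f t) - ((b - a) / n / 2) * ∑ i ∈ Finset.range n,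
      (f ((3 * x i + x (i + 1)) / 4) + f ((x i + 3 * x (i + 1)) / 4))
      = ∑ i ∈ Finset.range n, ((∫ t in (x i)..(x (i + 1)), f t)
          - (x (i + 1) - x i) / 2 *
            (f ((3 * x i + x (i + 1)) / 4) + f ((x i + 3 * x (i + 1)) / 4))) := by
    rw [hsplitf, Finset.mul_sum, ← Finset.sum_sub_distrib]
    refine Finset.sum_congr rfl fun i _ => ?_
    rw [hstep i]
  rw [main1]
  have est : ∀ i ∈ Finset.range n, |(∫ t in (x i)..(x (i + 1)), f t)
      - (x (i + 1) - x i) / 2 *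
        (f ((3 * x i + x (i + 1)) / 4) + f ((x i + 3 * x (i + 1)) / 4))|
      ≤ Real.sqrt (((b - a) / n) ^ 5 / 5120) *
          Real.sqrt (∫ t in (x i)..(x (i + 1)), f'' t ^ 2) := by
    intro i hi
    rw [Finset.mem_range] at hi
    have h1 : a ≤ x i := (hmem i (by omega)).1
    have h2 : x (i + 1) ≤ b := (hmem (i + 1) (by omega)).2
    have hIcc : Set.Icc (x i) (x (i + 1)) ⊆ Set.Icc a b := Set.Icc_subset_Icc h1 h2
    have hIoo : Set.Ioo (x i) (x (i + 1)) ⊆ Set.Ioo a b := Set.Ioo_subset_Ioo h1 h2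
    have := quad_interval (x i) (x (i + 1)) (hlt i) f g f''
      (hcont.mono hIcc) (hgcont.mono hIcc)
      (fun t ht => hfg t (hIoo ht)) (fun t ht => hgf t (hIoo ht))
      (hint.mono_set (husub i hi)) (hL2.mono_set (husub i hi))
    rw [hstep i] at this ⊢
    exact this
  have hba : (0 : ℝ) ≤ b - a := by linarith
  have hc0 : (0 : ℝ) ≤ ((b - a) / n) ^ 5 / 5120 := by positivity
  have cs := Real.sum_sqrt_mul_sqrt_le (Finset.range n)
    (f := fun _ : ℕ => ((b - a) / n) ^ 5 / 5120)
    (g := fun i => ∫ t in (x i)..(x (i + 1)), f'' t ^ 2)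
    (fun _ => hc0)
    (fun i => intervalIntegral.integral_nonneg (hlt i).le (fun t _ => sq_nonneg _))
  rw [Finset.sum_const, Finset.card_range, nsmul_eq_mul, hBtot] at cs
  have step : |∑ i ∈ Finset.range n, ((∫ t in (x i)..(x (i + 1)), f t)
      - (x (i + 1) - x i) / 2 *
        (f ((3 * x i + x (i + 1)) / 4) + f ((x i + 3 * x (i + 1)) / 4)))|
      ≤ Real.sqrt ((n : ℝ) * (((b - a) / n) ^ 5 / 5120)) *
          Real.sqrt (∫ t in a..b, f'' t ^ 2) :=
    (Finset.abs_sum_le_sum_abs _ _).trans ((Finset.sum_le_sum est).trans cs)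
  refine step.trans ?_
  -- coefficient comparison
  have hπ0 : (0 : ℝ) < Real.pi := Real.pi_pos
  have hπ4 : Real.pi ≤ 4 := Real.pi_le_four
  have hD : (0 : ℝ) < 4 * Real.sqrt 3 * Real.pi * (n : ℝ) ^ 2 := by
    have h3 : (0 : ℝ) < Real.sqrt 3 := Real.sqrt_pos.2 (by norm_num)
    positivity
  have hrpow : (b - a) ^ ((5 : ℝ) / 2) = Real.sqrt ((b - a) ^ 5) := by
    rw [Real.sqrt_eq_rpow, ← Real.rpow_natCast (b - a) 5, ← Real.rpow_mul hba]
    norm_num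
  have hD2 : (4 * Real.sqrt 3 * Real.pi * (n : ℝ) ^ 2) ^ 2
      = 48 * Real.pi ^ 2 * (n : ℝ) ^ 4 := by
    have h3 : Real.sqrt 3 ^ 2 = 3 := Real.sq_sqrt (by norm_num)
    linear_combination (16 * Real.pi ^ 2 * (n : ℝ) ^ 4) * h3
  have hXle : (n : ℝ) * (((b - a) / n) ^ 5 / 5120)
      ≤ (b - a) ^ 5 / ((4 * Real.sqrt 3 * Real.pi * (n : ℝ) ^ 2) ^ 2) := by
    have hL : (n : ℝ) * (((b - a) / n) ^ 5 / 5120) = (b - a) ^ 5 / (5120 * (n : ℝ) ^ 4) := by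
      field_simp
    rw [hL, hD2]
    apply div_le_div_of_nonneg_left (pow_nonneg hba 5)
    · positivity
    · nlinarith [mul_nonneg (mul_nonneg (sub_nonneg.2 hπ4) (by positivity : (0:ℝ) ≤ 4 + Real.pi))
        (by positivity : (0:ℝ) ≤ (n : ℝ) ^ 4)]
  have hcoef : Real.sqrt ((n : ℝ) * (((b - a) / n) ^ 5 / 5120))
      ≤ (b - a) ^ ((5 : ℝ) / 2) / (4 * Real.sqrt 3 * Real.pi * (n : ℝ) ^ 2) := by
    calc Real.sqrt ((n : ℝ) * (((b - a) / n) ^ 5 / 5120))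
        ≤ Real.sqrt ((b - a) ^ 5 / ((4 * Real.sqrt 3 * Real.pi * (n : ℝ) ^ 2) ^ 2)) :=
          Real.sqrt_le_sqrt hXle
      _ = Real.sqrt ((b - a) ^ 5) / Real.sqrt ((4 * Real.sqrt 3 * Real.pi * (n : ℝ) ^ 2) ^ 2) :=
          Real.sqrt_div (pow_nonneg hba 5) _
      _ = (b - a) ^ ((5 : ℝ) / 2) / (4 * Real.sqrt 3 * Real.pi * (n : ℝ) ^ 2) := by
          rw [Real.sqrt_sq hD.le, hrpow]
  exact mul_le_mul_of_nonneg_right hcoef (Real.sqrt_nonneg _)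
end

section
/- Let a < b be real numbers and let f : [a,b] → [0,1] be a probability density function on [a,b] (so f is integrable with ∫_a^b f(t) dt = 1) with cumulative distribution function F(x) = ∫_a^x f(t) dt, and suppose γ ≤ f(t) ≤ Γ for all t ∈ [a,b] (so that F is differentiable with derivative f). Let E(X) = ∫_a^b t f(t) dt be the expectation, which satisfies E(X) = b − ∫_a^b F(t) dt. Then for all x ∈ [a, (a+b)/2], |(F(x) + F(a+b−x))/2 − (b − E(X))/(b − a)| ≤ [(b−a)/4 + |x − (3a+b)/4|] · (1/(b−a) − γ) and |(F(x) + F(a+b−x))/2 − (b − E(X))/(b − a)| ≤ [(b−a)/4 + |x − (3a+b)/4|] · (Γ − 1/(b−a)). -/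
open MeasureTheory intervalIntegral

/-- bound: |∫ (t-c₀) h| ≤ M' ∫ h when h ≥ 0 and |t-c₀| ≤ M' on [u,v]. -/
lemma kh_bound (u v c₀ M' : ℝ) (huv : u ≤ v) (h : ℝ → ℝ)
    (hh : IntervalIntegrable h volume u v)
    (hpos : ∀ t ∈ Set.Icc u v, 0 ≤ h t)
    (hK : ∀ t ∈ Set.Icc u v, |t - c₀| ≤ M') :
    |∫ t in u..v, (t - c₀) * h t| ≤ M' * ∫ t in u..v, h t := by
  have hKh : IntervalIntegrable (fun t => (t - c₀) * h t) volume u v :=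
    hh.continuousOn_mul ((continuous_id.sub continuous_const).continuousOn)
  rw [abs_le]
  constructor
  · have := integral_mono_on huv (hh.const_mul (-M')) hKh (fun t ht => by
      have h1 := hK t ht; have h2 := hpos t ht
      nlinarith [neg_abs_le (t - c₀)])
    rw [intervalIntegral.integral_const_mul] at this
    linarith
  · have := integral_mono_on huv hKh (hh.const_mul M') (fun t ht => by
      have h1 := hK t ht; have h2 := hpos t ht
      nlinarith [le_abs_self (t - c₀)])
    rw [intervalIntegral.integral_const_mul] at this
    linarith

lemma expand_int (f : ℝ → ℝ) (u v c₀ μ : ℝ)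
    (h1 : IntervalIntegrable (fun t => t * f t) volume u v)
    (h2 : IntervalIntegrable f volume u v) :
    ∫ t in u..v, (t - c₀) * (f t - μ)
      = (∫ t in u..v, t * f t) - c₀ * (∫ t in u..v, f t)
        - μ * ((v^2 - u^2)/2) + μ * c₀ * (v - u) := by
  have heq : (fun t => (t - c₀) * (f t - μ))
      = fun t => (t * f t - c₀ * f t) - (μ * t - μ * c₀) := by funext t; ring
  rw [heq, integral_sub (h1.sub (h2.const_mul c₀))
      ((intervalIntegrable_id.const_mul μ).sub intervalIntegrable_const),
    integral_sub h1 (h2.const_mul c₀),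
    integral_sub (intervalIntegrable_id.const_mul μ) intervalIntegrable_const,
    intervalIntegral.integral_const_mul, intervalIntegral.integral_const_mul, integral_id, intervalIntegral.integral_const, smul_eq_mul]
  ring

/-- **Application to probability density functions** (Theorem 4.1, inequalities (4.1), (4.2)).
Let `f : [a,b] → [0,1]` be a probability density (`∫_a^b f = 1`), `F x = ∫_a^x f` the
cumulative distribution function, differentiable on `(a,b)` with derivative `f`, and suppose
`γ ≤ f ≤ Γ` on `[a,b]`. With `E = ∫_a^b t f(t) dt` the expectation, for all
`x ∈ [a, (a+b)/2]`,
`|(F x + F (a+b-x))/2 - (b - E)/(b - a)| ≤ ((b-a)/4 + |x - (3a+b)/4|) (1/(b-a) - γ)`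
and the analogous inequality with `Γ - 1/(b-a)`. -/
theorem companion_ostrowski_pdf
    (a b γ Γ : ℝ) (hab : a < b) (f : ℝ → ℝ)
    (hrange : ∀ t ∈ Set.Icc a b, f t ∈ Set.Icc (0 : ℝ) 1)
    (hint : IntervalIntegrable f MeasureTheory.volume a b)
    (hone : (∫ t in a..b, f t) = 1)
    (hbound : ∀ t ∈ Set.Icc a b, γ ≤ f t ∧ f t ≤ Γ)
    (F : ℝ → ℝ) (hF : ∀ y, F y = ∫ t in a..y, f t)
    (hFderiv : ∀ t ∈ Set.Ioo a b, HasDerivAt F (f t) t)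
    (E : ℝ) (hE : E = ∫ t in a..b, t * f t) :
    ∀ x ∈ Set.Icc a ((a + b) / 2),
      |(F x + F (a + b - x)) / 2 - (b - E) / (b - a)|
          ≤ ((b - a) / 4 + |x - (3 * a + b) / 4|) * (1 / (b - a) - γ) ∧
      |(F x + F (a + b - x)) / 2 - (b - E) / (b - a)|
          ≤ ((b - a) / 4 + |x - (3 * a + b) / 4|) * (Γ - 1 / (b - a)) := by
  intro x hx
  obtain ⟨hax, hxm⟩ := hx
  have hba : (0:ℝ) < b - a := by linarith
  have hne : b - a ≠ 0 := ne_of_gt hba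
  have hxc : x ≤ a + b - x := by linarith
  have hcb : a + b - x ≤ b := by linarith
  have hac : a ≤ a + b - x := by linarith
  have hxb : x ≤ b := by linarith
  have hab' : a ≤ b := le_of_lt hab
  -- integrability on subintervals
  have hsub : ∀ u v : ℝ, a ≤ u → u ≤ b → a ≤ v → v ≤ b →
      IntervalIntegrable f MeasureTheory.volume u v := by
    intro u v h1 h2 h3 h4
    exact hint.mono_set (Set.uIcc_subset_uIcc (Set.mem_uIcc.2 (Or.inl ⟨h1, h2⟩))
      (Set.mem_uIcc.2 (Or.inl ⟨h3, h4⟩)))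
  have hfi1 := hsub a x le_rfl hab' hax hxb
  have hfi2 := hsub x (a + b - x) hax hxb hac hcb
  have hfi3 := hsub (a + b - x) b hac hcb hab' le_rfl
  have hfiac := hsub a (a + b - x) le_rfl hab' hac hcb
  have htf1 : IntervalIntegrable (fun t => t * f t) MeasureTheory.volume a x :=
    hfi1.continuousOn_mul continuous_id.continuousOn
  have htf2 : IntervalIntegrable (fun t => t * f t) MeasureTheory.volume x (a + b - x) :=
    hfi2.continuousOn_mul continuous_id.continuousOn
  have htf3 : IntervalIntegrable (fun t => t * f t) MeasureTheory.volume (a + b - x) b :=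
    hfi3.continuousOn_mul continuous_id.continuousOn
  -- splitting of the total integrals
  have h12 := intervalIntegral.integral_add_adjacent_intervals hfi1 hfi2
  have h123 := intervalIntegral.integral_add_adjacent_intervals hfiac hfi3
  have hP : (∫ t in a..x, f t) + (∫ t in x..(a + b - x), f t) + (∫ t in (a + b - x)..b, f t) = 1 := by
    rw [h12, h123, hone]
  have ht12 := intervalIntegral.integral_add_adjacent_intervals htf1 htf2
  have ht123 := intervalIntegral.integral_add_adjacent_intervals (htf1.trans htf2) htf3
  have hQ : (∫ t in a..x, t * f t) + (∫ t in x..(a + b - x), t * f t)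
      + (∫ t in (a + b - x)..b, t * f t) = E := by
    rw [ht12, ht123, hE]
  have hFc : F (a + b - x) = (∫ t in a..x, f t) + (∫ t in x..(a + b - x), f t) := by
    rw [hF (a + b - x), ← h12]
  -- the key identity
  have hkey : ∀ μ : ℝ, (F x + F (a + b - x)) / 2 - (b - E) / (b - a)
      = ((∫ t in a..x, (t - a) * (f t - μ))
          + (∫ t in x..(a + b - x), (t - (a + b) / 2) * (f t - μ))
          + (∫ t in (a + b - x)..b, (t - b) * (f t - μ))) / (b - a) := by
    intro μ
    have hmul : (∫ t in a..x, (t - a) * (f t - μ))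
        + (∫ t in x..(a + b - x), (t - (a + b) / 2) * (f t - μ))
        + (∫ t in (a + b - x)..b, (t - b) * (f t - μ))
        = (b - a) * (F x + F (a + b - x)) / 2 - (b - E) := by
      rw [expand_int f a x a μ htf1 hfi1,
        expand_int f x (a + b - x) ((a + b) / 2) μ htf2 hfi2,
        expand_int f (a + b - x) b b μ htf3 hfi3, hF x, hFc]
      linear_combination hQ - b * hP
    rw [hmul]
    field_simp
  -- the bound M
  obtain ⟨M, hM⟩ : ∃ M : ℝ, M = (b - a) / 4 + |x - (3 * a + b) / 4| := ⟨_, rfl⟩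
  have habs1 := le_abs_self (x - (3 * a + b) / 4)
  have habs2 := neg_abs_le (x - (3 * a + b) / 4)
  have hM1 : x - a ≤ M := by rw [hM]; linarith
  have hM2 : (a + b) / 2 - x ≤ M := by rw [hM]; linarith
  -- kernel bounds
  have hK1 : ∀ t ∈ Set.Icc a x, |t - a| ≤ M := by
    intro t ⟨u1, u2⟩; rw [abs_of_nonneg (by linarith)]; linarith
  have hK2 : ∀ t ∈ Set.Icc x (a + b - x), |t - (a + b) / 2| ≤ M := by
    intro t ⟨u1, u2⟩; rw [abs_le]; constructor <;> linarith
  have hK3 : ∀ t ∈ Set.Icc (a + b - x) b, |t - b| ≤ M := by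
    intro t ⟨u1, u2⟩; rw [abs_of_nonpos (by linarith)]; linarith
  -- subsets of [a,b]
  have hs1 : Set.Icc a x ⊆ Set.Icc a b := Set.Icc_subset_Icc le_rfl hxb
  have hs2 : Set.Icc x (a + b - x) ⊆ Set.Icc a b := Set.Icc_subset_Icc hax hcb
  have hs3 : Set.Icc (a + b - x) b ⊆ Set.Icc a b := Set.Icc_subset_Icc hac le_rfl
  constructor
  · -- γ inequality
    have hh1 : IntervalIntegrable (fun t => f t - γ) MeasureTheory.volume a x :=
      hfi1.sub intervalIntegrable_const
    have hh2 : IntervalIntegrable (fun t => f t - γ) MeasureTheory.volume x (a + b - x) :=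
      hfi2.sub intervalIntegrable_const
    have hh3 : IntervalIntegrable (fun t => f t - γ) MeasureTheory.volume (a + b - x) b :=
      hfi3.sub intervalIntegrable_const
    have b1 := kh_bound a x a M hax _ hh1
      (fun t ht => by linarith [(hbound t (hs1 ht)).1]) hK1
    have b2 := kh_bound x (a + b - x) ((a + b) / 2) M hxc _ hh2
      (fun t ht => by linarith [(hbound t (hs2 ht)).1]) hK2
    have b3 := kh_bound (a + b - x) b b M hcb _ hh3
      (fun t ht => by linarith [(hbound t (hs3 ht)).1]) hK3
    have hsum : (∫ t in a..x, (f t - γ)) + (∫ t in x..(a + b - x), (f t - γ))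
        + (∫ t in (a + b - x)..b, (f t - γ)) = 1 - γ * (b - a) := by
      rw [intervalIntegral.integral_sub hfi1 intervalIntegrable_const,
        intervalIntegral.integral_sub hfi2 intervalIntegrable_const,
        intervalIntegral.integral_sub hfi3 intervalIntegrable_const,
        intervalIntegral.integral_const, intervalIntegral.integral_const,
        intervalIntegral.integral_const, smul_eq_mul, smul_eq_mul, smul_eq_mul]
      linarith [hP]
    rw [hkey γ, ← hM, abs_div, abs_of_pos hba, div_le_iff₀ hba]
    calc |(∫ t in a..x, (t - a) * (f t - γ))
            + (∫ t in x..(a + b - x), (t - (a + b) / 2) * (f t - γ))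
            + (∫ t in (a + b - x)..b, (t - b) * (f t - γ))|
        ≤ |(∫ t in a..x, (t - a) * (f t - γ))|
            + |(∫ t in x..(a + b - x), (t - (a + b) / 2) * (f t - γ))|
            + |(∫ t in (a + b - x)..b, (t - b) * (f t - γ))| := abs_add_three _ _ _
      _ ≤ M * (∫ t in a..x, (f t - γ)) + M * (∫ t in x..(a + b - x), (f t - γ))
            + M * (∫ t in (a + b - x)..b, (f t - γ)) := by linarith
      _ = M * (1 - γ * (b - a)) := by linear_combination M * hsum
      _ = M * (1 / (b - a) - γ) * (b - a) := by
          have h : (1 / (b - a) - γ) * (b - a) = 1 - γ * (b - a) := by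
            field_simp
            try ring
          rw [mul_assoc, h]
  · -- Γ inequality
    have hh1 : IntervalIntegrable (fun t => Γ - f t) MeasureTheory.volume a x :=
      intervalIntegrable_const.sub hfi1
    have hh2 : IntervalIntegrable (fun t => Γ - f t) MeasureTheory.volume x (a + b - x) :=
      intervalIntegrable_const.sub hfi2
    have hh3 : IntervalIntegrable (fun t => Γ - f t) MeasureTheory.volume (a + b - x) b :=
      intervalIntegrable_const.sub hfi3
    have b1 := kh_bound a x a M hax _ hh1
      (fun t ht => by linarith [(hbound t (hs1 ht)).2]) hK1
    have b2 := kh_bound x (a + b - x) ((a + b) / 2) M hxc _ hh2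
      (fun t ht => by linarith [(hbound t (hs2 ht)).2]) hK2
    have b3 := kh_bound (a + b - x) b b M hcb _ hh3
      (fun t ht => by linarith [(hbound t (hs3 ht)).2]) hK3
    have flip : ∀ (u v c₀ : ℝ),
        (∫ t in u..v, (t - c₀) * (f t - Γ)) = -(∫ t in u..v, (t - c₀) * (Γ - f t)) := by
      intro u v c₀
      rw [← intervalIntegral.integral_neg]
      congr 1; funext t; ring
    have hsum : (∫ t in a..x, (Γ - f t)) + (∫ t in x..(a + b - x), (Γ - f t))
        + (∫ t in (a + b - x)..b, (Γ - f t)) = Γ * (b - a) - 1 := by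
      rw [intervalIntegral.integral_sub intervalIntegrable_const hfi1,
        intervalIntegral.integral_sub intervalIntegrable_const hfi2,
        intervalIntegral.integral_sub intervalIntegrable_const hfi3,
        intervalIntegral.integral_const, intervalIntegral.integral_const,
        intervalIntegral.integral_const, smul_eq_mul, smul_eq_mul, smul_eq_mul]
      linarith [hP]
    rw [hkey Γ, ← hM, abs_div, abs_of_pos hba, div_le_iff₀ hba,
      flip a x a, flip x (a + b - x) ((a + b) / 2), flip (a + b - x) b b]
    calc |-(∫ t in a..x, (t - a) * (Γ - f t))
            + -(∫ t in x..(a + b - x), (t - (a + b) / 2) * (Γ - f t))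
            + -(∫ t in (a + b - x)..b, (t - b) * (Γ - f t))|
        ≤ |-(∫ t in a..x, (t - a) * (Γ - f t))|
            + |-(∫ t in x..(a + b - x), (t - (a + b) / 2) * (Γ - f t))|
            + |-(∫ t in (a + b - x)..b, (t - b) * (Γ - f t))| := abs_add_three _ _ _
      _ = |(∫ t in a..x, (t - a) * (Γ - f t))|
            + |(∫ t in x..(a + b - x), (t - (a + b) / 2) * (Γ - f t))|
            + |(∫ t in (a + b - x)..b, (t - b) * (Γ - f t))| := by
          rw [abs_neg, abs_neg, abs_neg]
      _ ≤ M * (∫ t in a..x, (Γ - f t)) + M * (∫ t in x..(a + b - x), (Γ - f t))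
            + M * (∫ t in (a + b - x)..b, (Γ - f t)) := by linarith
      _ = M * (Γ * (b - a) - 1) := by linear_combination M * hsum
      _ = M * (Γ - 1 / (b - a)) * (b - a) := by
          have h : (Γ - 1 / (b - a)) * (b - a) = Γ * (b - a) - 1 := by
            field_simp
            try ring
          rw [mul_assoc, h]
end

section
/- Let a < b be real numbers and let f : [a,b] → [0,1] be a probability density function on [a,b] with cumulative distribution function F(x) = ∫_a^x f(t) dt, and suppose F is twice continuously differentiable on (a,b) with F' = f and f' ∈ L²[a,b]. Let E(X) = ∫_a^b t f(t) dt be the expectation, which satisfies E(X) = b − ∫_a^b F(t) dt. Then for all x ∈ [a, (a+b)/2], |(F(x) + F(a+b−x))/2 − (b − E(X))/(b − a)| ≤ ((b−a)^{1/2}/π) · [ (b−a)²/48 + (x − (3a+b)/4)² ]^{1/2} · ‖f'‖₂. -/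
open MeasureTheory Set intervalIntegral

lemma cs_integral {μ : MeasureTheory.Measure ℝ} {F G : ℝ → ℝ}
    (hF2 : Integrable (fun t => F t ^ 2) μ) (hG2 : Integrable (fun t => G t ^ 2) μ)
    (hFG : Integrable (fun t => F t * G t) μ) :
    (∫ t, F t * G t ∂μ) ^ 2 ≤ (∫ t, F t ^ 2 ∂μ) * ∫ t, G t ^ 2 ∂μ := by
  set A := ∫ t, F t ^ 2 ∂μ with hA
  set B := ∫ t, F t * G t ∂μ with hB
  set C := ∫ t, G t ^ 2 ∂μ with hC
  have hA0 : 0 ≤ A := integral_nonneg fun t => sq_nonneg _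
  have hC0 : 0 ≤ C := integral_nonneg fun t => sq_nonneg _
  have key : ∀ l : ℝ, 0 ≤ A * l ^ 2 + 2 * B * l + C := by
    intro l
    have h0 : 0 ≤ ∫ t, (l * F t + G t) ^ 2 ∂μ := integral_nonneg fun t => sq_nonneg _
    have heq : ∫ t, (l * F t + G t) ^ 2 ∂μ = A * l ^ 2 + 2 * B * l + C := by
      have hfun : (fun t => (l * F t + G t) ^ 2)
          = fun t => l ^ 2 * F t ^ 2 + ((2 * l) * (F t * G t) + G t ^ 2) := by
        funext t; ring
      have i1 : Integrable (fun t => l ^ 2 * F t ^ 2) μ := hF2.const_mul _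
      have i2 : Integrable (fun t => 2 * l * (F t * G t)) μ := hFG.const_mul _
      have i3 : Integrable (fun t => 2 * l * (F t * G t) + G t ^ 2) μ := i2.add hG2
      rw [hfun, integral_add i1 i3, integral_add i2 hG2, MeasureTheory.integral_const_mul, MeasureTheory.integral_const_mul]
      ring
    linarith [heq ▸ h0]
  rcases eq_or_lt_of_le hA0 with hA1 | hA1
  · have hBz : B = 0 := by
      by_contra hBne
      have h2 : 2 * B * (-(C + 1) / (2 * B)) = -(C + 1) := by
        field_simp
      have h1 := key (-(C + 1) / (2 * B))
      rw [← hA1, h2] at h1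
      simp at h1
      linarith
    rw [hBz, ← hA1]
    nlinarith
  · have hAne : A ≠ 0 := ne_of_gt hA1
    have h1 := key (-(B / A))
    have e1 : A * (-(B / A)) ^ 2 + 2 * B * (-(B / A)) + C = C - B ^ 2 / A := by
      field_simp
      ring
    rw [e1] at h1
    have h4 : B ^ 2 / A ≤ C := by linarith
    calc B ^ 2 = B ^ 2 / A * A := by rw [div_mul_cancel₀ _ hAne]
    _ ≤ C * A := mul_le_mul_of_nonneg_right h4 hA0
    _ = A * C := mul_comm _ _

lemma quintic_bound (u w : ℝ) (hu : 0 ≤ u) (hw : 0 ≤ w) :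
    (987/100 : ℝ) * (u^5/10 + w^5/10 + (u^2-w^2)*w^3/3 + (u^2-w^2)^2*w/2)
      ≤ (2*(u+w))^3*((2*(u+w))^2/48 + ((u-w)/2)^2) := by
  nlinarith [sq_nonneg (u-w), sq_nonneg (u+w), mul_nonneg hu hw, sq_nonneg u, sq_nonneg w,
    mul_nonneg (mul_nonneg hu hu) hw, mul_nonneg (mul_nonneg hw hw) hu, sq_nonneg (u*w),
    mul_nonneg (mul_nonneg (mul_nonneg hu hu) hu) hw]

set_option maxHeartbeats 1000000 in



/-- **Application to probability density functions, `f' ∈ L²[a,b]`** (Theorem 4.2, inequality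
(4.3)). Let `f : [a,b] → [0,1]` be a probability density (`∫_a^b f = 1`), `F x = ∫_a^x f`
the cumulative distribution function, assumed twice continuously differentiable on `(a,b)`
with `F' = f`, `f` differentiable on `(a,b)` with continuous derivative `f'` which is
square-integrable on `[a,b]`. With `E = ∫_a^b t f(t) dt` the expectation, for all
`x ∈ [a, (a+b)/2]`,
`|(F x + F (a+b-x))/2 - (b - E)/(b - a)|
   ≤ (√(b-a)/π) · √((b-a)²/48 + (x - (3a+b)/4)²) · ‖f'‖₂`. -/
theorem companion_ostrowski_pdf_second_deriv_L2
    (a b : ℝ) (hab : a < b) (f f' : ℝ → ℝ)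
    (hrange : ∀ t ∈ Set.Icc a b, f t ∈ Set.Icc (0 : ℝ) 1)
    (hint : IntervalIntegrable f MeasureTheory.volume a b)
    (hone : (∫ t in a..b, f t) = 1)
    (F : ℝ → ℝ) (hF : ∀ y, F y = ∫ t in a..y, f t)
    (hFderiv : ∀ t ∈ Set.Ioo a b, HasDerivAt F (f t) t)
    (hfderiv : ∀ t ∈ Set.Ioo a b, HasDerivAt f (f' t) t)
    (hcont' : ContinuousOn f' (Set.Ioo a b))
    (hL2 : IntervalIntegrable (fun t => (f' t) ^ 2) MeasureTheory.volume a b)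
    (E : ℝ) (hE : E = ∫ t in a..b, t * f t) :
    ∀ x ∈ Set.Icc a ((a + b) / 2),
      |(F x + F (a + b - x)) / 2 - (b - E) / (b - a)|
        ≤ Real.sqrt (b - a) / Real.pi *
            Real.sqrt ((b - a) ^ 2 / 48 + (x - (3 * a + b) / 4) ^ 2) *
            Real.sqrt (∫ t in a..b, (f' t) ^ 2) := by
  intro x hx
  obtain ⟨hax, hxm'⟩ := hx
  have hab' : a ≤ b := hab.le
  set m : ℝ := (a + b) / 2 with hm
  set y : ℝ := a + b - x with hy
  have hxm : x ≤ m := hxm'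
  have hxb : x ≤ b := by rw [hy] at *; linarith [hxm']
  have hxy : x ≤ y := by rw [hy]; linarith [hxm']
  have hay : a ≤ y := by rw [hy]; linarith
  have hyb : y ≤ b := by rw [hy]; linarith
  have hmy : m ≤ y := by rw [hy, hm]; linarith
  have ham : a < m := by rw [hm]; linarith
  have hmb : m < b := by rw [hm]; linarith
  have hm_mem : m ∈ Set.Ioo a b := ⟨ham, hmb⟩
  -- basic subset helper
  have hsubIcc : ∀ {c d : ℝ}, a ≤ c → c ≤ d → d ≤ b → Set.uIcc c d ⊆ Set.Icc a b := by
    intro c d h1 h2 h3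
    rw [Set.uIcc_of_le h2]
    exact Set.Icc_subset_Icc h1 h3
  have hsubU : ∀ {c d : ℝ}, a ≤ c → c ≤ d → d ≤ b → Set.uIcc c d ⊆ Set.uIcc a b := by
    intro c d h1 h2 h3
    rw [Set.uIcc_of_le hab']
    exact hsubIcc h1 h2 h3
  have hq : ∀ e k : ℝ, Continuous (fun t : ℝ => ((t - e) ^ 2 + k) / 2) := fun e k =>
    (((continuous_id.sub continuous_const).pow 2).add continuous_const).div_const 2
  -- f' is interval integrable
  have hf'meas : AEStronglyMeasurable f' (volume.restrict (Set.Ioc a b)) := by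
    rw [← Measure.restrict_congr_set Ioo_ae_eq_Ioc]
    exact hcont'.aestronglyMeasurable measurableSet_Ioo
  have hf'int : IntervalIntegrable f' volume a b := by
    rw [intervalIntegrable_iff_integrableOn_Ioc_of_le hab']
    have hL2' : IntegrableOn (fun t => (f' t) ^ 2) (Set.Ioc a b) volume :=
      (intervalIntegrable_iff_integrableOn_Ioc_of_le hab').mp hL2
    refine MeasureTheory.Integrable.mono' ((integrable_const (1:ℝ)).add hL2' |>.div_const 2) hf'meas ?_
    filter_upwards with t
    have h1 : (|f' t| - 1) ^ 2 ≥ 0 := sq_nonneg _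
    have h2 : |f' t| ^ 2 = f' t ^ 2 := sq_abs _
    simp only [Real.norm_eq_abs, Pi.add_apply, Pi.div_apply]
    nlinarith [h1, h2]
  -- continuity of F
  have hFc : ContinuousOn F (Set.Icc a b) := by
    have h1 := intervalIntegral.continuousOn_primitive_interval' hint
      (Set.left_mem_uIcc (a := a) (b := b))
    rw [Set.uIcc_of_le hab'] at h1
    exact h1.congr fun t _ => hF t
  have hFa : F a = 0 := by rw [hF]; simp
  have hFb : F b = 1 := by rw [hF]; exact hone
  -- the modified density g
  set g : ℝ → ℝ := fun t => f m - ∫ s in t..m, f' s with hgdef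
  have hgf : ∀ t ∈ Set.Ioo a b, g t = f t := by
    intro t ht
    have hsub : Set.uIcc t m ⊆ Set.Ioo a b := Set.ordConnected_Ioo.uIcc_subset ht hm_mem
    have hder : ∀ s ∈ Set.uIcc t m, HasDerivAt f (f' s) s := fun s hs => hfderiv s (hsub hs)
    have hint' : IntervalIntegrable f' volume t m := hf'int.mono_set fun s hs =>
      Set.uIcc_of_le hab' ▸ Set.Ioo_subset_Icc_self (hsub hs)
    have := intervalIntegral.integral_eq_sub_of_hasDerivAt hder hint'
    rw [hgdef]
    simp only
    rw [this]
    ring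
  have hgc : ContinuousOn g (Set.Icc a b) := by
    have h1 := intervalIntegral.continuousOn_primitive_interval' hf'int
      (show m ∈ Set.uIcc a b by rw [Set.uIcc_of_le hab']; exact ⟨ham.le, hmb.le⟩)
    rw [Set.uIcc_of_le hab'] at h1
    have h2 : ContinuousOn (fun t => f m + ∫ s in m..t, f' s) (Set.Icc a b) :=
      continuousOn_const.add h1
    refine h2.congr fun t _ => ?_
    rw [hgdef]
    simp only
    rw [intervalIntegral.integral_symm]
    ring
  have hgd : ∀ t ∈ Set.Ioo a b, HasDerivAt g (f' t) t := by
    intro t ht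
    have hev : f =ᶠ[nhds t] g :=
      Filter.eventuallyEq_of_mem (isOpen_Ioo.mem_nhds ht) fun s hs => (hgf s hs).symm
    exact (hfderiv t ht).congr_of_eventuallyEq hev.symm
  -- integration by parts with F
  have ibpF : ∀ c d e : ℝ, a ≤ c → c ≤ d → d ≤ b →
      (∫ t in c..d, (t - e) * f t)
        = (d - e) * F d - (c - e) * F c - ∫ t in c..d, F t := by
    intro c d e h1 h2 h3
    have hres := intervalIntegral.integral_mul_deriv_eq_deriv_mul_of_hasDeriv_right
      (u := fun t => t - e) (v := F) (u' := fun _ => (1:ℝ)) (v' := f)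
      ((continuous_id.sub continuous_const).continuousOn)
      (hFc.mono (hsubIcc h1 h2 h3))
      (fun t _ => ((hasDerivAt_id t).sub_const e).hasDerivWithinAt)
      (fun t ht => by
        rw [min_eq_left h2, max_eq_right h2] at ht
        exact (hFderiv t ⟨lt_of_le_of_lt h1 ht.1, lt_of_lt_of_le ht.2 h3⟩).hasDerivWithinAt)
      intervalIntegrable_const
      (hint.mono_set (hsubU h1 h2 h3))
    simpa using hres
  -- integration by parts with g
  have ibpg : ∀ c d e k : ℝ, a ≤ c → c ≤ d → d ≤ b →
      (∫ t in c..d, ((t - e) ^ 2 + k) / 2 * f' t)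
        = ((d - e) ^ 2 + k) / 2 * g d - ((c - e) ^ 2 + k) / 2 * g c
          - ∫ t in c..d, (t - e) * g t := by
    intro c d e k h1 h2 h3
    have hu : ∀ t : ℝ, HasDerivAt (fun t => ((t - e) ^ 2 + k) / 2) (t - e) t := by
      intro t
      have h := ((((hasDerivAt_id t).sub_const e).pow 2).add_const k).div_const 2
      refine h.congr_deriv ?_
      simp
    exact intervalIntegral.integral_mul_deriv_eq_deriv_mul_of_hasDeriv_right
      (u := fun t => ((t - e) ^ 2 + k) / 2) (v := g) (u' := fun t => t - e) (v' := f')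
      ((hq e k).continuousOn)
      (hgc.mono (hsubIcc h1 h2 h3))
      (fun t _ => (hu t).hasDerivWithinAt)
      (fun t ht => by
        rw [min_eq_left h2, max_eq_right h2] at ht
        exact (hgd t ⟨lt_of_le_of_lt h1 ht.1, lt_of_lt_of_le ht.2 h3⟩).hasDerivWithinAt)
      ((continuous_id.sub continuous_const).intervalIntegrable _ _)
      (hf'int.mono_set (hsubU h1 h2 h3))
  -- a.e. transfer from g to f
  have hae : ∀ᵐ t : ℝ, t ≠ a ∧ t ≠ b := by
    have h1 : ∀ᵐ t : ℝ, t ≠ a := by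
      rw [MeasureTheory.ae_iff]
      have : {t : ℝ | ¬t ≠ a} = {a} := by ext t; simp
      rw [this]
      exact measure_singleton a
    have h2 : ∀ᵐ t : ℝ, t ≠ b := by
      rw [MeasureTheory.ae_iff]
      have : {t : ℝ | ¬t ≠ b} = {b} := by ext t; simp
      rw [this]
      exact measure_singleton b
    exact h1.and h2
  have htrans : ∀ c d e : ℝ, a ≤ c → c ≤ d → d ≤ b →
      (∫ t in c..d, (t - e) * g t) = ∫ t in c..d, (t - e) * f t := by
    intro c d e h1 h2 h3
    apply intervalIntegral.integral_congr_ae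
    filter_upwards [hae] with t ht hmem
    rw [Set.uIoc_of_le h2] at hmem
    have : t ∈ Set.Ioo a b :=
      ⟨lt_of_le_of_lt h1 hmem.1, lt_of_le_of_ne (hmem.2.trans h3) ht.2⟩
    rw [hgf t this]
  -- integrability of F on subintervals
  have hFint : ∀ c d : ℝ, a ≤ c → c ≤ d → d ≤ b → IntervalIntegrable F volume c d := by
    intro c d h1 h2 h3
    exact (hFc.mono (hsubIcc h1 h2 h3)).intervalIntegrable
  have hFsplit : (∫ t in a..x, F t) + (∫ t in x..y, F t) + (∫ t in y..b, F t)
      = ∫ t in a..b, F t := by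
    rw [intervalIntegral.integral_add_adjacent_intervals (hFint a x le_rfl hax hxb)
      (hFint x y hax hxy hyb)]
    exact intervalIntegral.integral_add_adjacent_intervals (hFint a y le_rfl hay hyb)
      (hFint y b hay hyb le_rfl)
  have hEint : b - E = ∫ t in a..b, F t := by
    have h := ibpF a b 0 le_rfl hab' le_rfl
    have h2 : (∫ t in a..b, (t - 0) * f t) = ∫ t in a..b, t * f t := by
      apply intervalIntegral.integral_congr
      intro t _
      simp
    rw [hE, ← h2, h, hFa, hFb]
    ring
  have hFsum : (∫ t in a..x, (t - a) * f t) + (∫ t in x..y, (t - m) * f t)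
      + (∫ t in y..b, (t - b) * f t)
      = (b - a) / 2 * (F x + F y) - ∫ t in a..b, F t := by
    rw [ibpF a x a le_rfl hax hxb, ibpF x y m hax hxy hyb, ibpF y b b hay hyb le_rfl,
      ← hFsplit, hFa, hy, hm]
    ring
  -- the quadratic kernel
  set c0 : ℝ := (x - a) ^ 2 - (x - m) ^ 2 with hc0
  have hGsum : (∫ t in a..x, ((t - a) ^ 2 + 0) / 2 * f' t)
      + (∫ t in x..y, ((t - m) ^ 2 + c0) / 2 * f' t)
      + (∫ t in y..b, ((t - b) ^ 2 + 0) / 2 * f' t)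
      = -((b - a) / 2 * (F x + F y) - ∫ t in a..b, F t) := by
    rw [ibpg a x a 0 le_rfl hax hxb, ibpg x y m c0 hax hxy hyb, ibpg y b b 0 hay hyb le_rfl,
      htrans a x a le_rfl hax hxb, htrans x y m hax hxy hyb, htrans y b b hay hyb le_rfl]
    have hbd : ((x - a) ^ 2 + 0) / 2 * g x - ((a - a) ^ 2 + 0) / 2 * g a
        + (((y - m) ^ 2 + c0) / 2 * g y - ((x - m) ^ 2 + c0) / 2 * g x)
        + (((b - b) ^ 2 + 0) / 2 * g b - ((y - b) ^ 2 + 0) / 2 * g y) = 0 := by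
      rw [hc0, hy, hm]
      ring
    linarith [hFsum, hbd]
  set P : ℝ → ℝ := fun t => if t ≤ x then ((t - a) ^ 2 + 0) / 2
    else if t ≤ y then ((t - m) ^ 2 + c0) / 2 else ((t - b) ^ 2 + 0) / 2 with hP
  have hPc : Continuous P := by
    have hinner : Continuous (fun t : ℝ => if t ≤ y then ((t - m) ^ 2 + c0) / 2
        else ((t - b) ^ 2 + 0) / 2) := by
      apply Continuous.if_le (hq m c0) (hq b 0) continuous_id continuous_const
      intro t ht
      simp only [id_eq] at ht
      rw [ht, hc0, hy, hm]
      ring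
    rw [hP]
    apply Continuous.if_le (hq a 0) hinner continuous_id continuous_const
    intro t ht
    simp only [id_eq] at ht
    rw [ht, if_pos hxy, hc0, hm]
    ring
  have hPeq1 : ∀ t ∈ Set.Icc a x, P t = ((t - a) ^ 2 + 0) / 2 := by
    intro t ht
    rw [hP]
    simp only
    rw [if_pos ht.2]
  have hPeq2 : ∀ t ∈ Set.Icc x y, P t = ((t - m) ^ 2 + c0) / 2 := by
    intro t ht
    rcases le_or_gt t x with htx | htx
    · have hteq : t = x := le_antisymm htx ht.1
      subst hteq
      rw [hP]
      simp only
      rw [if_pos le_rfl, hc0]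
      ring
    · rw [hP]
      simp only
      rw [if_neg (not_le.mpr htx), if_pos ht.2]
  have hPeq3 : ∀ t ∈ Set.Icc y b, P t = ((t - b) ^ 2 + 0) / 2 := by
    intro t ht
    rcases le_or_gt t x with htx | htx
    · have hyx : y ≤ x := ht.1.trans htx
      have hxeq : x = y := le_antisymm hxy hyx
      have hteq : t = y := le_antisymm (htx.trans hxy) ht.1
      subst hteq
      rw [hP]
      simp only
      rw [if_pos htx]
      have h2x : x = a + b - x := hxeq.trans hy
      rw [hy]
      first
      | linear_combination ((b - a) / 2) * h2x
      | linear_combination (-(b - a) / 2) * h2x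
      | (nlinarith [h2x])
    · rcases le_or_gt t y with hty | hty
      · have hteq : t = y := le_antisymm hty ht.1
        subst hteq
        rw [hP]
        simp only
        rw [if_neg (not_le.mpr htx), if_pos le_rfl, hc0, hy, hm]
        ring
      · rw [hP]
        simp only
        rw [if_neg (not_le.mpr htx), if_neg (not_le.mpr hty)]
  -- splitting of the P integrals
  have hPfint : ∀ c d : ℝ, a ≤ c → c ≤ d → d ≤ b →
      IntervalIntegrable (fun t => P t * f' t) volume c d := by
    intro c d h1 h2 h3
    exact (hf'int.mono_set (hsubU h1 h2 h3)).continuousOn_mul hPc.continuousOn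
  have hsplitP : (∫ t in a..x, P t * f' t) + (∫ t in x..y, P t * f' t)
      + (∫ t in y..b, P t * f' t) = ∫ t in a..b, P t * f' t := by
    rw [intervalIntegral.integral_add_adjacent_intervals (hPfint a x le_rfl hax hxb)
      (hPfint x y hax hxy hyb)]
    exact intervalIntegral.integral_add_adjacent_intervals (hPfint a y le_rfl hay hyb)
      (hPfint y b hay hyb le_rfl)
  have hc1 : (∫ t in a..x, P t * f' t) = ∫ t in a..x, ((t - a) ^ 2 + 0) / 2 * f' t := by
    apply intervalIntegral.integral_congr
    intro t ht
    rw [Set.uIcc_of_le hax] at ht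
    show P t * f' t = _
    rw [hPeq1 t ht]
  have hc2 : (∫ t in x..y, P t * f' t) = ∫ t in x..y, ((t - m) ^ 2 + c0) / 2 * f' t := by
    apply intervalIntegral.integral_congr
    intro t ht
    rw [Set.uIcc_of_le hxy] at ht
    show P t * f' t = _
    rw [hPeq2 t ht]
  have hc3 : (∫ t in y..b, P t * f' t) = ∫ t in y..b, ((t - b) ^ 2 + 0) / 2 * f' t := by
    apply intervalIntegral.integral_congr
    intro t ht
    rw [Set.uIcc_of_le hyb] at ht
    show P t * f' t = _
    rw [hPeq3 t ht]
  -- quintic antiderivative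
  have hquint : ∀ c d e k : ℝ, (∫ t in c..d, (((t - e) ^ 2 + k) / 2) ^ 2)
      = ((d - e) ^ 5 / 5 + 2 * k * (d - e) ^ 3 / 3 + k ^ 2 * (d - e)) / 4
        - ((c - e) ^ 5 / 5 + 2 * k * (c - e) ^ 3 / 3 + k ^ 2 * (c - e)) / 4 := by
    intro c d e k
    have hder : ∀ t : ℝ, HasDerivAt
        (fun t => ((t - e) ^ 5 / 5 + 2 * k * (t - e) ^ 3 / 3 + k ^ 2 * (t - e)) / 4)
        ((((t - e) ^ 2 + k) / 2) ^ 2) t := by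
      intro t
      have hb' : HasDerivAt (fun t : ℝ => t - e) 1 t := (hasDerivAt_id t).sub_const e
      have h5 := (hb'.pow 5).div_const 5
      have h3 := ((hb'.pow 3).const_mul (2 * k)).div_const 3
      have h1 := hb'.const_mul (k ^ 2)
      have h := ((h5.add h3).add h1).div_const 4
      refine h.congr_deriv ?_
      norm_num
      ring
    rw [intervalIntegral.integral_eq_sub_of_hasDerivAt (fun t _ => hder t)
      (((hq e k).pow 2).intervalIntegrable _ _)]
  have hI2eq : (∫ t in a..b, P t ^ 2)
      = (x - a) ^ 5 / 10 + (m - x) ^ 5 / 10 + ((x - a) ^ 2 - (m - x) ^ 2) * (m - x) ^ 3 / 3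
        + ((x - a) ^ 2 - (m - x) ^ 2) ^ 2 * (m - x) / 2 := by
    have hP2c : Continuous fun t => P t ^ 2 := hPc.pow 2
    have hsplit2 : (∫ t in a..x, P t ^ 2) + (∫ t in x..y, P t ^ 2) + (∫ t in y..b, P t ^ 2)
        = ∫ t in a..b, P t ^ 2 := by
      rw [intervalIntegral.integral_add_adjacent_intervals (hP2c.intervalIntegrable a x)
        (hP2c.intervalIntegrable x y)]
      exact intervalIntegral.integral_add_adjacent_intervals (hP2c.intervalIntegrable a y)
        (hP2c.intervalIntegrable y b)
    have hs1 : (∫ t in a..x, P t ^ 2) = ∫ t in a..x, (((t - a) ^ 2 + 0) / 2) ^ 2 := by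
      apply intervalIntegral.integral_congr
      intro t ht
      rw [Set.uIcc_of_le hax] at ht
      show P t ^ 2 = _
      rw [hPeq1 t ht]
    have hs2 : (∫ t in x..y, P t ^ 2) = ∫ t in x..y, (((t - m) ^ 2 + c0) / 2) ^ 2 := by
      apply intervalIntegral.integral_congr
      intro t ht
      rw [Set.uIcc_of_le hxy] at ht
      show P t ^ 2 = _
      rw [hPeq2 t ht]
    have hs3 : (∫ t in y..b, P t ^ 2) = ∫ t in y..b, (((t - b) ^ 2 + 0) / 2) ^ 2 := by
      apply intervalIntegral.integral_congr
      intro t ht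
      rw [Set.uIcc_of_le hyb] at ht
      show P t ^ 2 = _
      rw [hPeq3 t ht]
    rw [← hsplit2, hs1, hs2, hs3, hquint, hquint, hquint, hc0, hy, hm]
    ring
  have hI2n : 0 ≤ ∫ t in a..b, P t ^ 2 :=
    intervalIntegral.integral_nonneg hab' fun t _ => sq_nonneg _
  have hNn : 0 ≤ ∫ t in a..b, f' t ^ 2 :=
    intervalIntegral.integral_nonneg hab' fun t _ => sq_nonneg _
  have hpi2 : Real.pi ^ 2 ≤ 987 / 100 := by
    nlinarith [Real.pi_lt_d6, Real.pi_pos]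
  have hba : (0:ℝ) < b - a := by linarith
  have hkey : Real.pi ^ 2 * (∫ t in a..b, P t ^ 2)
      ≤ (b - a) ^ 3 * ((b - a) ^ 2 / 48 + (x - (3 * a + b) / 4) ^ 2) := by
    have h1 : b - a = 2 * ((x - a) + (m - x)) := by rw [hm]; ring
    have h2 : x - (3 * a + b) / 4 = ((x - a) - (m - x)) / 2 := by rw [hm]; ring
    calc Real.pi ^ 2 * (∫ t in a..b, P t ^ 2)
        ≤ (987 / 100) * (∫ t in a..b, P t ^ 2) := mul_le_mul_of_nonneg_right hpi2 hI2n
    _ ≤ (b - a) ^ 3 * ((b - a) ^ 2 / 48 + (x - (3 * a + b) / 4) ^ 2) := by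
        rw [hI2eq, h1, h2]
        exact quintic_bound (x - a) (m - x) (by linarith) (by linarith)
  -- Cauchy-Schwarz
  have hPF : IntervalIntegrable (fun t => P t * f' t) volume a b := hPfint a b le_rfl hab' le_rfl
  have hcs : (∫ t in a..b, P t * f' t) ^ 2
      ≤ (∫ t in a..b, P t ^ 2) * ∫ t in a..b, f' t ^ 2 := by
    rw [intervalIntegral.integral_of_le hab', intervalIntegral.integral_of_le hab',
      intervalIntegral.integral_of_le hab']
    exact cs_integral
      ((hPc.pow 2).integrableOn_Ioc)
      ((intervalIntegrable_iff_integrableOn_Ioc_of_le hab').mp hL2)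
      ((intervalIntegrable_iff_integrableOn_Ioc_of_le hab').mp hPF)
  -- representation
  have hbig : (∫ t in a..b, P t * f' t)
      = -((b - a) / 2 * (F x + F y) - ∫ t in a..b, F t) := by
    rw [← hsplitP, hc1, hc2, hc3]
    exact hGsum
  have hrepr : (F x + F y) / 2 - (b - E) / (b - a)
      = -((∫ t in a..b, P t * f' t) / (b - a)) := by
    rw [hbig, hEint]
    field_simp
  rw [hrepr, abs_neg, abs_div, abs_of_pos hba, div_le_iff₀ hba]
  have h1 : |∫ t in a..b, P t * f' t|
      ≤ Real.sqrt (∫ t in a..b, P t ^ 2) * Real.sqrt (∫ t in a..b, f' t ^ 2) := by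
    rw [← Real.sqrt_sq_eq_abs]
    calc Real.sqrt ((∫ t in a..b, P t * f' t) ^ 2)
        ≤ Real.sqrt ((∫ t in a..b, P t ^ 2) * ∫ t in a..b, f' t ^ 2) := Real.sqrt_le_sqrt hcs
    _ = _ := Real.sqrt_mul hI2n _
  have h2 : Real.pi * Real.sqrt (∫ t in a..b, P t ^ 2)
      ≤ (b - a) * (Real.sqrt (b - a)
        * Real.sqrt ((b - a) ^ 2 / 48 + (x - (3 * a + b) / 4) ^ 2)) := by
    have h3 := Real.sqrt_le_sqrt hkey
    rw [Real.sqrt_mul (sq_nonneg _), Real.sqrt_sq Real.pi_pos.le] at h3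
    rw [show (b - a) ^ 3 * ((b - a) ^ 2 / 48 + (x - (3 * a + b) / 4) ^ 2)
        = (b - a) ^ 2 * ((b - a) * ((b - a) ^ 2 / 48 + (x - (3 * a + b) / 4) ^ 2)) from by ring,
      Real.sqrt_mul (sq_nonneg _), Real.sqrt_sq hba.le,
      Real.sqrt_mul hba.le] at h3
    exact h3
  have h4 : Real.sqrt (∫ t in a..b, P t ^ 2)
      ≤ (b - a) * (Real.sqrt (b - a)
        * Real.sqrt ((b - a) ^ 2 / 48 + (x - (3 * a + b) / 4) ^ 2)) / Real.pi := by
    rw [le_div_iff₀ Real.pi_pos]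
    linarith [h2, mul_comm (Real.sqrt (∫ t in a..b, P t ^ 2)) Real.pi]
  calc |∫ t in a..b, P t * f' t|
      ≤ Real.sqrt (∫ t in a..b, P t ^ 2) * Real.sqrt (∫ t in a..b, f' t ^ 2) := h1
  _ ≤ ((b - a) * (Real.sqrt (b - a)
        * Real.sqrt ((b - a) ^ 2 / 48 + (x - (3 * a + b) / 4) ^ 2)) / Real.pi)
        * Real.sqrt (∫ t in a..b, f' t ^ 2) :=
      mul_le_mul_of_nonneg_right h4 (Real.sqrt_nonneg _)
  _ = Real.sqrt (b - a) / Real.pi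
        * Real.sqrt ((b - a) ^ 2 / 48 + (x - (3 * a + b) / 4) ^ 2)
        * Real.sqrt (∫ t in a..b, f' t ^ 2) * (b - a) := by ring
end
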